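/- arXiv:2310.05795 — 7 statements merged into one kernel-verified Lean document; each statement's English description precedes it below -/
import Mathlib

section
/- Let S ≤ G₁ × ⋯ × Gₙ be a full subdirect product, let i ∈ I, and let J ⊆ I∖{i} be a subset with |J| ≥ 2. Then ⁅U_J(1)^{(i)}, I_J(|J|−1)^{(i)}⁆ ≤ N_J^{(i)}. -/
/-- The kernel of the projection `p_J : S → ∏_{j ∈ J} G_j`, viewed as a subgroup of the
direct product: the elements of `S` whose coordinates in `J` are all trivial. -/
def projKer {n : ℕ} (G : Fin n → Type*) [∀ i, Group (G i)]
    (S : Subgroup (∀ i, G i)) (J : Finset (Fin n)) : Subgroup (∀ i, G i) :=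
  S ⊓ ⨅ j ∈ J, (Pi.evalMonoidHom G j).ker

/-- `N_J^{(i)} = p_i (ker p_J)`, a subgroup of `G i`. -/
def NJ {n : ℕ} (G : Fin n → Type*) [∀ i, Group (G i)]
    (S : Subgroup (∀ i, G i)) (i : Fin n) (J : Finset (Fin n)) : Subgroup (G i) :=
  (projKer G S J).map (Pi.evalMonoidHom G i)

/-- `U_J(1)^{(i)}`: the subgroup of `G i` generated by `⋃_{l ∈ J} N_{{l}}^{(i)}`. -/
def UJ {n : ℕ} (G : Fin n → Type*) [∀ i, Group (G i)]
    (S : Subgroup (∀ i, G i)) (i : Fin n) (J : Finset (Fin n)) : Subgroup (G i) :=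
  ⨆ l ∈ J, NJ G S i {l}

/-- `I_J(|J| - 1)^{(i)} = ⋂_{l ∈ J} N_{J \ {l}}^{(i)}`. -/
def IJ {n : ℕ} (G : Fin n → Type*) [∀ i, Group (G i)]
    (S : Subgroup (∀ i, G i)) (i : Fin n) (J : Finset (Fin n)) : Subgroup (G i) :=
  ⨅ l ∈ J, NJ G S i (J.erase l)

open scoped commutatorElement

lemma mem_NJ_iff {n : ℕ} (G : Fin n → Type*) [∀ i, Group (G i)]
    (S : Subgroup (∀ i, G i)) (i : Fin n) (J : Finset (Fin n)) (x : G i) :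
    x ∈ NJ G S i J ↔ ∃ s, s ∈ S ∧ (∀ j ∈ J, s j = 1) ∧ s i = x := by
  simp [NJ, projKer, Subgroup.mem_map, Subgroup.mem_inf, Subgroup.mem_iInf, MonoidHom.mem_ker,
    Pi.evalMonoidHom_apply, and_assoc]

lemma conj_mem_NJ {n : ℕ} (G : Fin n → Type*) [∀ i, Group (G i)]
    (S : Subgroup (∀ i, G i))
    (hsubdirect : ∀ i, S.map (Pi.evalMonoidHom G i) = ⊤)
    (i : Fin n) (J : Finset (Fin n)) (g x : G i) (hx : x ∈ NJ G S i J) :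
    g * x * g⁻¹ ∈ NJ G S i J := by
  obtain ⟨s, hsS, hsJ, hsi⟩ := (mem_NJ_iff G S i J x).1 hx
  have hg : g ∈ S.map (Pi.evalMonoidHom G i) := by rw [hsubdirect i]; trivial
  obtain ⟨u, huS, hui⟩ := hg
  refine (mem_NJ_iff G S i J _).2 ⟨u * s * u⁻¹, mul_mem (mul_mem huS hsS) (inv_mem huS), ?_, ?_⟩
  · intro j hj
    simp [hsJ j hj]
  · simp only [Pi.evalMonoidHom_apply] at hui
    simp [hui, hsi]

/-- The key single-generator computation: `⁅N_{l}, N_{J \ {l}}⁆ ⊆ N_J` elementwise. -/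
lemma commutator_single_mem {n : ℕ} (G : Fin n → Type*) [∀ i, Group (G i)]
    (S : Subgroup (∀ i, G i)) (i : Fin n) (J : Finset (Fin n)) (l : Fin n) (hl : l ∈ J)
    (x y : G i) (hx : x ∈ NJ G S i {l}) (hy : y ∈ NJ G S i (J.erase l)) :
    ⁅x, y⁆ ∈ NJ G S i J := by
  obtain ⟨s, hsS, hsl, hsi⟩ := (mem_NJ_iff G S i {l} x).1 hx
  obtain ⟨t, htS, htJ, hti⟩ := (mem_NJ_iff G S i (J.erase l) y).1 hy
  have hsl1 : s l = 1 := hsl l (Finset.mem_singleton_self l)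
  refine (mem_NJ_iff G S i J _).2 ⟨⁅s, t⁆, by
    show s * t * s⁻¹ * t⁻¹ ∈ S
    exact mul_mem (mul_mem (mul_mem hsS htS) (inv_mem hsS)) (inv_mem htS), ?_, ?_⟩
  · intro j hj
    rcases eq_or_ne j l with rfl | hne
    · simp [commutatorElement_def, hsl1]
    · have : t j = 1 := htJ j (Finset.mem_erase.2 ⟨hne, hj⟩)
      simp [commutatorElement_def, this]
  · simp [commutatorElement_def, hsi, hti]

/-- If `S` is a full subdirect product of `G₁ × ⋯ × Gₙ`, `i ∈ I` and
`J ⊆ I \ {i}` has at least two elements, then `⁅U_J(1)^{(i)}, I_J(|J|-1)^{(i)}⁆ ≤ N_J^{(i)}`. -/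
theorem commutator_UJ_IJ_le_NJ {n : ℕ} (hn : 2 ≤ n) (G : Fin n → Type*) [∀ i, Group (G i)]
    (S : Subgroup (∀ i, G i))
    (hsubdirect : ∀ i, S.map (Pi.evalMonoidHom G i) = ⊤)
    (hfull : ∀ i, S ⊓ (MonoidHom.mulSingle G i).range ≠ ⊥)
    (i : Fin n) (J : Finset (Fin n)) (hiJ : i ∉ J) (hJ : 2 ≤ J.card) :
    ⁅UJ G S i J, IJ G S i J⁆ ≤ NJ G S i J := by
  rw [Subgroup.commutator_le]
  intro g₁ hg₁ g₂ hg₂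
  -- g₂ lies in each N_{J \ {l}} for l ∈ J
  have hg₂' : ∀ l ∈ J, g₂ ∈ NJ G S i (J.erase l) := by
    intro l hl
    exact (Subgroup.mem_iInf.1 (Subgroup.mem_iInf.1 hg₂ l)) hl
  -- induct over the supremum defining UJ
  refine Subgroup.iSup_induction (C := fun x => ⁅x, g₂⁆ ∈ NJ G S i J)
    (fun l => ⨆ _ : l ∈ J, NJ G S i {l}) hg₁ ?_ ?_ ?_
  · intro l x hx
    rcases Classical.em (l ∈ J) with hl | hl
    · simp only [hl, iSup_pos] at hx
      exact commutator_single_mem G S i J l hl x g₂ hx (hg₂' l hl)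
    · simp only [iSup_neg hl] at hx
      rw [Subgroup.mem_bot.1 hx]
      simpa using one_mem (NJ G S i J)
  · simpa using one_mem (NJ G S i J)
  · intro x y hx hy
    have key : ⁅x * y, g₂⁆ = (x * ⁅y, g₂⁆ * x⁻¹) * ⁅x, g₂⁆ := by
      simp [commutatorElement_def]; group
    rw [key]
    exact mul_mem (conj_mem_NJ G S hsubdirect i J x _ hy) hx
end

section
/- Let S ≤ G₁ × ⋯ × Gₙ be a full subdirect product and fix i ∈ I. Assume that: (1) for each k ∈ I∖{i}, the quotient G_i / N_{{k}}^{(i)} is virtually abelian; and (2) for each nonempty J ⊆ I∖{i} and each finite-index subgroup K of U_J(1)^{(i)}, there is a finite-index subgroup H_K of G_i such that K ≤ H_K and ⁅H_K, H_K⁆ = ⁅K, K⁆. Then G_i / L_i is virtually nilpotent. -/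
/-- `G ⧸ N` is virtually nilpotent: there is a finite-index subgroup `H` of `G` containing
`N` such that `H ⧸ N` is nilpotent, i.e. some term of the lower central series of `H`
is contained in `N`. -/
def QuotVirtuallyNilpotent {G : Type*} [Group G] (N : Subgroup G) : Prop :=
  ∃ H : Subgroup G, N ≤ H ∧ H.FiniteIndex ∧
    ∃ c : ℕ, ((⊤ : Subgroup H).lowerCentralSeries c).map H.subtype ≤ N

/-- `G ⧸ N` is virtually abelian: there is a finite-index subgroup `H` of `G` containing
`N` such that `H ⧸ N` is abelian, i.e. `⁅H, H⁆ ≤ N`. -/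
def QuotVirtuallyAbelian {G : Type*} [Group G] (N : Subgroup G) : Prop :=
  ∃ H : Subgroup G, N ≤ H ∧ H.FiniteIndex ∧ ⁅H, H⁆ ≤ N

/-- `L_i = S ∩ G_i`, identified with a subgroup of `G i`. -/
def Li {n : ℕ} (G : Fin n → Type*) [∀ i, Group (G i)]
    (S : Subgroup (∀ i, G i)) (i : Fin n) : Subgroup (G i) :=
  (S ⊓ (MonoidHom.mulSingle G i).range).map (Pi.evalMonoidHom G i)

open Subgroup Pointwise
open scoped commutatorElement

section Infra
variable {G : Type*} [Group G]

theorem my_le_iff_map_bot (P X : Subgroup G) [P.Normal] :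
    X ≤ P ↔ X.map (QuotientGroup.mk' P) = ⊥ := by
  rw [Subgroup.map_eq_bot_iff, QuotientGroup.ker_mk']

theorem myThreeSubgroups {A B C P : Subgroup G} [P.Normal]
    (h1 : ⁅⁅B, C⁆, A⁆ ≤ P) (h2 : ⁅⁅C, A⁆, B⁆ ≤ P) : ⁅⁅A, B⁆, C⁆ ≤ P := by
  rw [my_le_iff_map_bot] at h1 h2 ⊢
  rw [Subgroup.map_commutator, Subgroup.map_commutator] at h1 h2 ⊢
  exact Subgroup.commutator_commutator_eq_bot_of_rotate h1 h2

theorem myCommSupLe {A B C P : Subgroup G} [P.Normal]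
    (h1 : ⁅A, C⁆ ≤ P) (h2 : ⁅B, C⁆ ≤ P) : ⁅A ⊔ B, C⁆ ≤ P := by
  rw [my_le_iff_map_bot] at h1 h2 ⊢
  rw [Subgroup.map_commutator] at h1 h2 ⊢
  rw [Subgroup.commutator_eq_bot_iff_le_centralizer] at h1 h2 ⊢
  rw [Subgroup.map_sup]
  exact sup_le h1 h2

theorem myCommiSupLe {ι : Sort*} {A : ι → Subgroup G} {C P : Subgroup G} [P.Normal]
    (h : ∀ j, ⁅A j, C⁆ ≤ P) : ⁅⨆ j, A j, C⁆ ≤ P := by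
  rw [my_le_iff_map_bot]
  rw [Subgroup.map_commutator, Subgroup.commutator_eq_bot_iff_le_centralizer, Subgroup.map_iSup]
  refine iSup_le fun j => ?_
  have := h j
  rw [my_le_iff_map_bot, Subgroup.map_commutator,
    Subgroup.commutator_eq_bot_iff_le_centralizer] at this
  exact this

/-- Iterated commutator `[[...[A,B],B...],B]`. -/
def iterComm (B A : Subgroup G) : ℕ → Subgroup G
  | 0 => A
  | (n+1) => ⁅iterComm B A n, B⁆

@[simp] theorem iterComm_zero (B A : Subgroup G) : iterComm B A 0 = A := rfl

theorem iterComm_succ (B A : Subgroup G) (n : ℕ) :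
    iterComm B A (n+1) = ⁅iterComm B A n, B⁆ := rfl

theorem iterComm_normal {B A : Subgroup G} (hA : A.Normal) (hB : B.Normal) :
    ∀ n, (iterComm B A n).Normal
  | 0 => hA
  | (n+1) => by
      haveI := iterComm_normal hA hB n
      haveI := hB
      exact Subgroup.commutator_normal _ _

theorem iterComm_mono {B B' A A' : Subgroup G} (hB : B ≤ B') (hA : A ≤ A') :
    ∀ n, iterComm B A n ≤ iterComm B' A' n
  | 0 => hA
  | (n+1) => Subgroup.commutator_mono (iterComm_mono hB hA n) hB

theorem iterComm_le_self {B A : Subgroup G} (hA : A.Normal) (hB : B.Normal) :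
    ∀ n, iterComm B A n ≤ A
  | 0 => le_rfl
  | (n+1) => by
      haveI := iterComm_normal hA hB n
      exact (Subgroup.commutator_le_left _ _).trans (iterComm_le_self hA hB n)

theorem iterComm_map {G' : Type*} [Group G'] (f : G →* G') (B A : Subgroup G) :
    ∀ n, (iterComm B A n).map f = iterComm (B.map f) (A.map f) n
  | 0 => rfl
  | (n+1) => by
      rw [iterComm_succ, Subgroup.map_commutator, iterComm_map f B A n, iterComm_succ]

theorem lcs_eq_iterComm (n : ℕ) : (⊤ : Subgroup G).lowerCentralSeries n = iterComm ⊤ ⊤ n := by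
  induction n with
  | zero => rfl
  | succ n ih =>
      rw [show (⊤ : Subgroup G).lowerCentralSeries (n+1) = ⁅(⊤ : Subgroup G).lowerCentralSeries n, ⊤⁆ from rfl,
        iterComm_succ, ih]

theorem lcs_add_eq_iterComm (m k : ℕ) :
    (⊤ : Subgroup G).lowerCentralSeries (m + k) = iterComm ⊤ ((⊤ : Subgroup G).lowerCentralSeries m) k := by
  induction k with
  | zero => rfl
  | succ k ih =>
      rw [← Nat.add_assoc,
        show (⊤ : Subgroup G).lowerCentralSeries (m+k+1) = ⁅(⊤ : Subgroup G).lowerCentralSeries (m+k), ⊤⁆ from rfl,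
        iterComm_succ, ih]

theorem map_subtype_lcs (T : Subgroup G) (n : ℕ) :
    ((⊤ : Subgroup T).lowerCentralSeries n).map T.subtype = iterComm T T n := by
  rw [lcs_eq_iterComm, iterComm_map]
  congr 1 <;> rw [← MonoidHom.range_eq_map, T.range_subtype]

theorem commElem_mul_left (a b c : G) : ⁅a*b, c⁆ = a*⁅b,c⁆*a⁻¹ * ⁅a,c⁆ := by
  simp only [commutatorElement_def]; group

theorem commElem_mul_right (a b c : G) : ⁅a, b*c⁆ = ⁅a,b⁆ * (b * ⁅a,c⁆ * b⁻¹) := by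
  simp only [commutatorElement_def]; group

theorem commElem_inv_left (a c : G) : ⁅a⁻¹, c⁆ = a⁻¹ * ⁅a,c⁆⁻¹ * a := by
  simp only [commutatorElement_def]; group

theorem commElem_cancel_left {c x y : G} (h1 : Commute c y) (h2 : Commute c ⁅x,y⁆) :
    ⁅c*x, y⁆ = ⁅x,y⁆ := by
  rw [commElem_mul_left, commutatorElement_eq_one_iff_commute.mpr h1, mul_one,
    h2.eq, mul_assoc, mul_inv_cancel, mul_one]

theorem commElem_cancel_right {d x b : G} (h1 : Commute d x) (h2 : Commute d ⁅x,b⁆) :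
    ⁅x, d*b⁆ = ⁅x,b⁆ := by
  have h3 : ⁅x,d⁆ = 1 := commutatorElement_eq_one_iff_commute.mpr h1.symm
  rw [commElem_mul_right, h3, one_mul, h2.eq, mul_assoc, mul_inv_cancel, mul_one]

theorem commElem_gen {a b da db : G} (h1 : Commute db a) (h2 : Commute db ⁅a,b⁆)
    (h3 : Commute da db) (h4 : Commute da b) (h5 : Commute da ⁅a,b⁆) :
    ⁅da*a, db*b⁆ = ⁅a,b⁆ := by
  have e2 : ⁅a, db*b⁆ = ⁅a,b⁆ := commElem_cancel_right h1 h2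
  have e1 : ⁅da*a, db*b⁆ = ⁅a, db*b⁆ := by
    refine commElem_cancel_left (h3.mul_right h4) ?_
    rw [e2]; exact h5
  rw [e1, e2]

theorem comm_mem_iff_conj_eq (P : Subgroup G) [P.Normal] (w h : G) :
    ⁅w, h⁆ ∈ P ↔ (QuotientGroup.mk' P) (h * w * h⁻¹) = (QuotientGroup.mk' P) w := by
  have kerP : (QuotientGroup.mk' P).ker = P := QuotientGroup.ker_mk' P
  constructor
  · intro hp
    have h1 : (QuotientGroup.mk' P) ⁅w, h⁆ = 1 := by
      rw [← MonoidHom.mem_ker, kerP]; exact hp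
    rw [map_commutatorElement, commutatorElement_eq_one_iff_mul_comm] at h1
    simp only [map_mul, map_inv]
    rw [← h1]; group
  · intro hconj
    rw [← kerP, MonoidHom.mem_ker, map_commutatorElement,
      commutatorElement_eq_one_iff_mul_comm]
    simp only [map_mul, map_inv] at hconj
    have h2 : (QuotientGroup.mk' P) h * (QuotientGroup.mk' P) w
        = (QuotientGroup.mk' P) w * (QuotientGroup.mk' P) h := by
      calc (QuotientGroup.mk' P) h * (QuotientGroup.mk' P) w
          = ((QuotientGroup.mk' P) h * (QuotientGroup.mk' P) w * ((QuotientGroup.mk' P) h)⁻¹) *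
            (QuotientGroup.mk' P) h := by group
        _ = (QuotientGroup.mk' P) w * (QuotientGroup.mk' P) h := by rw [hconj]
    exact h2.symm

theorem commute_mk' {A B P : Subgroup G} [P.Normal] (hle : ⁅A, B⁆ ≤ P) {a b : G}
    (ha : a ∈ A) (hb : b ∈ B) :
    Commute ((QuotientGroup.mk' P) a) ((QuotientGroup.mk' P) b) := by
  have h1 : ⁅a,b⁆ ∈ P := hle (Subgroup.commutator_mem_commutator ha hb)
  have h2 : (QuotientGroup.mk' P) ⁅a,b⁆ = 1 := by
    rw [← MonoidHom.mem_ker, QuotientGroup.ker_mk']; exact h1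
  rwa [map_commutatorElement, commutatorElement_eq_one_iff_commute] at h2

theorem commutator_commutator_le' {A B C P : Subgroup G} [P.Normal]
    (h : ∀ a ∈ A, ∀ b ∈ B, ∀ c ∈ C, ⁅⁅a,b⁆,c⁆ ∈ P) : ⁅⁅A,B⁆,C⁆ ≤ P := by
  rw [Subgroup.commutator_le]
  intro w hw c hc
  rw [Subgroup.commutator_def] at hw
  induction hw using Subgroup.closure_induction with
  | mem x hx =>
      obtain ⟨a, ha, b, hb, rfl⟩ := hx
      exact h a ha b hb c hc
  | one => simpa using P.one_mem
  | mul x y hx hy px py =>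
      rw [commElem_mul_left]
      exact mul_mem (‹P.Normal›.conj_mem _ py x) px
  | inv x hx px =>
      rw [commElem_inv_left]
      have := ‹P.Normal›.conj_mem _ (inv_mem px) x⁻¹
      simpa using this

end Infra

section Infra2
variable {G : Type*} [Group G]

theorem iterComm_le_of_le {B A : Subgroup G} (hA : A.Normal) (hB : B.Normal)
    {n m : ℕ} (h : n ≤ m) : iterComm B A m ≤ iterComm B A n := by
  induction m with
  | zero => simpa [Nat.le_zero.mp h] using le_rfl
  | succ m ih =>
      rcases Nat.lt_or_ge n (m+1) with hlt | hge
      · have h' : n ≤ m := Nat.lt_succ_iff.mp hlt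
        refine le_trans ?_ (ih h')
        haveI := iterComm_normal hA hB m
        exact Subgroup.commutator_le_left _ _
      · have : n = m+1 := le_antisymm h hge
        subst this; exact le_rfl

theorem map_conjAut_eq {N : Subgroup G} (hN : N.Normal) (g : G) :
    N.map (MulAut.conj g).toMonoidHom = N := by
  apply le_antisymm
  · rintro x ⟨y, hy, rfl⟩
    simpa using hN.conj_mem y hy g
  · intro x hx
    refine ⟨g⁻¹ * x * g, by simpa using hN.conj_mem x hx g⁻¹, by simp [MulAut.conj]; group⟩

theorem iSup_normal {ι : Sort*} (f : ι → Subgroup G) (h : ∀ i, (f i).Normal) :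
    (⨆ i, f i).Normal := by
  constructor
  intro x hx g
  have : (⨆ i, f i).map (MulAut.conj g).toMonoidHom = ⨆ i, f i := by
    rw [Subgroup.map_iSup]
    exact iSup_congr fun i => map_conjAut_eq (h i) g
  rw [← this]
  refine ⟨x, hx, ?_⟩
  simp [MulAut.conj]

end Infra2
section E1
variable {H : Type*} [Group H]

theorem E1lemma (K : Subgroup H)
    (hc : ⁅(⊤ : Subgroup H), (⊤ : Subgroup H)⁆ ≤ ⁅K, K⁆)
    (hab : ⁅⁅(⊤ : Subgroup H), (⊤ : Subgroup H)⁆, ⁅(⊤ : Subgroup H), (⊤ : Subgroup H)⁆⁆ = ⊥)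
    (e : ℕ) (hKe : iterComm K K e = ⊥) :
    (⊤ : Subgroup H).lowerCentralSeries (1 + e) = ⊥ := by
  set V : Subgroup H := ⁅(⊤ : Subgroup H), (⊤ : Subgroup H)⁆ with hVdef
  haveI hVN : V.Normal := Subgroup.commutator_normal ⊤ ⊤
  have hVeq : V = ⁅K, K⁆ := le_antisymm hc (Subgroup.commutator_mono le_top le_top)
  set Ks : Subgroup H := K ⊔ V with hKsdef
  have hKle : K ≤ Ks := le_sup_left
  have hVle : V ≤ Ks := le_sup_right
  haveI hKsN : Ks.Normal := by
    constructor
    intro x hx g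
    rw [hKsdef] at hx ⊢
    have hx' : x ∈ ((K : Set H) * (V : Set H)) := by
      rw [← Subgroup.mul_normal K V]; exact hx
    obtain ⟨k, hk, v, hv, rfl⟩ := hx'
    have hdec : g * (k * v) * g⁻¹ = (⁅g,k⁆ * k) * (g * v * g⁻¹) := by group
    rw [hdec]
    refine mul_mem (mul_mem ?_ ((le_sup_left : K ≤ K ⊔ V) hk)) ?_
    · refine (le_sup_right : V ≤ K ⊔ V) ?_
      exact Subgroup.commutator_mem_commutator (mem_top g) (mem_top k)
    · exact (le_sup_right : V ≤ K ⊔ V) (hVN.conj_mem v hv g)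
  set W : ℕ → Subgroup H := iterComm Ks V with hWdef
  haveI hWN : ∀ j, (W j).Normal := iterComm_normal hVN hKsN
  have hWV : ∀ j, W j ≤ V := iterComm_le_self hVN hKsN
  -- commuting of V-elements
  have vcomm : ∀ {x y : H}, x ∈ V → y ∈ V → ⁅x,y⁆ = 1 := by
    intro x y hx hy
    have : ⁅x,y⁆ ∈ (⊥ : Subgroup H) := hab ▸ Subgroup.commutator_mem_commutator hx hy
    simpa using this
  -- decomposition of elements of Ks
  have hKsmem : ∀ x ∈ Ks, ∃ k ∈ K, ∃ v ∈ V, k * v = x := by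
    intro x hx
    have hx' : x ∈ ((K : Set H) * (V : Set H)) := by
      rw [← Subgroup.mul_normal K V]; exact hx
    obtain ⟨k, hk, v, hv, h⟩ := hx'
    exact ⟨k, hk, v, hv, h⟩
  -- F1 at subgroup level
  have hF1 : ∀ j, ⁅W j, Ks⁆ ≤ ⁅W j, K⁆ := by
    intro j
    rw [Subgroup.commutator_le]
    intro w hw x hx
    obtain ⟨k, hk, v, hv, rfl⟩ := hKsmem x hx
    have hwv : ⁅w, v⁆ = 1 := vcomm (hWV j hw) hv
    have hwk : ⁅w, k⁆ ∈ ⁅W j, K⁆ := Subgroup.commutator_mem_commutator hw hk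
    rw [commElem_mul_right, hwv]
    simpa using hwk
  have hWK : ∀ j, W j ≤ iterComm K K (j+1) := by
    intro j
    induction j with
    | zero => exact hc
    | succ j ih =>
        have : W (j+1) ≤ ⁅W j, K⁆ := hF1 j
        refine this.trans ?_
        rw [iterComm_succ K K (j+1)]
        exact Subgroup.commutator_mono ih le_rfl
  -- bracket facts used for quotient commuting
  have hVV : ∀ (P : Subgroup H), ⁅V, V⁆ ≤ P := by
    intro P; rw [hab]; exact bot_le
  -- main induction
  have hG : ∀ j, ⁅W j, (⊤ : Subgroup H)⁆ ≤ W (j+1) := by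
    intro j
    induction j with
    | zero =>
        have hW1 : W 1 = ⁅V, Ks⁆ := rfl
        have hbase : ⁅(⁅K, K⁆ : Subgroup H), (⊤ : Subgroup H)⁆ ≤ W 1 := by
          haveI : (W 1).Normal := hWN 1
          refine commutator_commutator_le' ?_
          intro k hk k' hk' h _
          set φ := QuotientGroup.mk' (W 1) with hφ
          have hVK : ⁅V, K⁆ ≤ W 1 := by
            rw [hW1]; exact Subgroup.commutator_mono le_rfl hKle
          have hVVW : ⁅V, V⁆ ≤ W 1 := hVV _
          have memV : ∀ {g g' : H}, ⁅g, g'⁆ ∈ V := fun {g g'} =>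
            Subgroup.commutator_mem_commutator (mem_top g) (mem_top g')
          rw [comm_mem_iff_conj_eq]
          have e1 : h * ⁅k,k'⁆ * h⁻¹ = ⁅h*k*h⁻¹, h*k'*h⁻¹⁆ := conjugate_commutatorElement k k' h
          have e2 : h*k*h⁻¹ = ⁅h,k⁆ * k := by group
          have e3 : h*k'*h⁻¹ = ⁅h,k'⁆ * k' := by group
          rw [e1, e2, e3, map_commutatorElement, map_mul, map_mul, map_commutatorElement]
          exact commElem_gen
            (commute_mk' hVK memV hk)
            (by rw [← map_commutatorElement]; exact commute_mk' hVVW memV memV)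
            (commute_mk' hVVW memV memV)
            (commute_mk' hVK memV hk')
            (by rw [← map_commutatorElement]; exact commute_mk' hVVW memV memV)
        calc ⁅W 0, (⊤ : Subgroup H)⁆ = ⁅V, ⊤⁆ := rfl
          _ ≤ ⁅(⁅K,K⁆ : Subgroup H), ⊤⁆ := Subgroup.commutator_mono (hVeq ▸ le_rfl) le_rfl
          _ ≤ W 1 := hbase
    | succ j ih =>
        haveI : (W (j+2)).Normal := hWN (j+2)
        have hWsucc : W (j+1) = ⁅W j, Ks⁆ := rfl
        rw [hWsucc]
        refine commutator_commutator_le' ?_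
        intro w' hw' x hx h _
        set φ := QuotientGroup.mk' (W (j+2)) with hφ
        have hda : ⁅h, w'⁆ ∈ W (j+1) := by
          have : ⁅w', h⁆ ∈ W (j+1) := ih (Subgroup.commutator_mem_commutator hw' (mem_top h))
          rw [← commutatorElement_inv]
          exact inv_mem this
        have hdb : ⁅h, x⁆ ∈ V := Subgroup.commutator_mem_commutator (mem_top h) (mem_top x)
        have hab' : ⁅w', x⁆ ∈ W (j+1) := by
          rw [hWsucc]; exact Subgroup.commutator_mem_commutator hw' hx
        have hWKs : ⁅W (j+1), Ks⁆ ≤ W (j+2) := le_of_eq rfl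
        have hWV' : ⁅W (j+1), V⁆ ≤ W (j+2) := (Subgroup.commutator_mono le_rfl hVle).trans hWKs
        have hVVW : ⁅V, V⁆ ≤ W (j+2) := hVV _
        rw [comm_mem_iff_conj_eq]
        have e1 : h * ⁅w',x⁆ * h⁻¹ = ⁅h*w'*h⁻¹, h*x*h⁻¹⁆ := conjugate_commutatorElement w' x h
        have e2 : h*w'*h⁻¹ = ⁅h,w'⁆ * w' := by group
        have e3 : h*x*h⁻¹ = ⁅h,x⁆ * x := by group
        rw [e1, e2, e3, map_commutatorElement, map_mul, map_mul, map_commutatorElement]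
        exact commElem_gen
          (commute_mk' hVVW hdb (hWV j hw'))
          (by rw [← map_commutatorElement]; exact commute_mk' hVVW hdb ((hWV (j+1)) hab'))
          (commute_mk' hWV' hda hdb)
          (commute_mk' hWKs hda hx)
          (by rw [← map_commutatorElement]; exact commute_mk' hWV' hda (hWV (j+1) hab'))
  -- lcs H (1+j) ≤ W j
  have hlcs : ∀ j, (⊤ : Subgroup H).lowerCentralSeries (1+j) ≤ W j := by
    intro j
    induction j with
    | zero =>
        rw [show (1+0 : ℕ) = 1 from rfl]
        rw [show (⊤ : Subgroup H).lowerCentralSeries 1 = ⁅(⊤ : Subgroup H), ⊤⁆ from by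
          rw [show (⊤ : Subgroup H).lowerCentralSeries 1 = ⁅(⊤ : Subgroup H).lowerCentralSeries 0, ⊤⁆ from rfl,
            Subgroup.lowerCentralSeries_zero]]
        exact le_rfl
    | succ j ih =>
        rw [show (1+(j+1) : ℕ) = (1+j)+1 from rfl,
          show (⊤ : Subgroup H).lowerCentralSeries ((1+j)+1) = ⁅(⊤ : Subgroup H).lowerCentralSeries (1+j), ⊤⁆ from rfl]
        exact (Subgroup.commutator_mono ih le_rfl).trans (hG j)
  have final : W e ≤ ⊥ := by
    refine (hWK e).trans ?_
    rw [iterComm_succ, hKe]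
    rw [show (⁅(⊥ : Subgroup H), K⁆ : Subgroup H) = ⊥ from Subgroup.commutator_bot_left K]
  exact le_bot_iff.mp ((hlcs e).trans final)

end E1
section Glue
variable {H : Type*} [Group H]

theorem hallGlue (d e : ℕ)
    (hd : iterComm ⊤ (⁅(⊤ : Subgroup H), (⊤ : Subgroup H)⁆) d ≤
      iterComm ⁅(⊤ : Subgroup H), (⊤ : Subgroup H)⁆ ⁅(⊤ : Subgroup H), (⊤ : Subgroup H)⁆ 1)
    (he : iterComm ⁅(⊤ : Subgroup H), (⊤ : Subgroup H)⁆
      ⁅(⊤ : Subgroup H), (⊤ : Subgroup H)⁆ e = ⊥) :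
    ∃ m, (⊤ : Subgroup H).lowerCentralSeries m = ⊥ := by
  set V : Subgroup H := ⁅(⊤ : Subgroup H), (⊤ : Subgroup H)⁆ with hVdef
  haveI hVN : V.Normal := Subgroup.commutator_normal ⊤ ⊤
  haveI hTN : (⊤ : Subgroup H).Normal := inferInstance
  set VV : ℕ → Subgroup H := iterComm V V with hVVdef
  haveI hVVN : ∀ i, (VV i).Normal := iterComm_normal hVN hVN
  have hVVle : ∀ i, VV i ≤ V := iterComm_le_self hVN hVN
  set Y : ℕ → Subgroup H := iterComm ⊤ V with hYdef
  haveI hYN : ∀ b, (Y b).Normal := iterComm_normal hVN hTN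
  have hYle : ∀ b, Y b ≤ V := iterComm_le_self hVN hTN
  -- the [γ_a, γ_b] ≤ γ_{a+b} lemma for the V-series
  have hgg : ∀ b a, ⁅VV a, VV b⁆ ≤ VV (a+b+1) := by
    intro b
    induction b with
    | zero =>
        intro a
        rw [show VV (a+0+1) = ⁅VV a, V⁆ from rfl]
        exact Subgroup.commutator_mono le_rfl (hVVle 0)
    | succ b ih =>
        intro a
        rw [show VV (b+1) = ⁅VV b, V⁆ from rfl, Subgroup.commutator_comm]
        haveI : (VV (a+(b+1)+1)).Normal := hVVN _
        refine myThreeSubgroups ?_ ?_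
        · rw [Subgroup.commutator_comm V (VV a),
            show (⁅VV a, V⁆ : Subgroup H) = VV (a+1) from rfl]
          refine (ih (a+1)).trans (le_of_eq ?_)
          congr 1; omega
        · refine (Subgroup.commutator_mono (ih a) le_rfl).trans ?_
          exact le_of_eq rfl
  -- U induction
  have hU : ∀ i, ∃ k, iterComm ⊤ (VV i) k ≤ VV (i+1) := by
    intro i
    induction i with
    | zero => exact ⟨d, hd⟩
    | succ i ih =>
        obtain ⟨k, hk⟩ := ih
        set X : ℕ → Subgroup H := iterComm ⊤ (VV i) with hXdef
        haveI hXN : ∀ a, (X a).Normal := iterComm_normal (hVVN i) hTN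
        have hXle : ∀ a, X a ≤ VV i := iterComm_le_self (hVVN i) hTN
        set W : ℕ → ℕ → Subgroup H := fun a b => ⁅X a, Y b⁆ with hWdef
        haveI hWN : ∀ a b, (W a b).Normal := by
          intro a b
          haveI := hXN a; haveI := hYN b
          exact Subgroup.commutator_normal _ _
        -- both deep bounds
        have hbound : ∀ a b, k ≤ a ∨ d ≤ b → W a b ≤ VV (i+2) := by
          intro a b hab
          rcases hab with ha | hb
          · have hXa : X a ≤ VV (i+1) :=
              (iterComm_le_of_le (hVVN i) hTN ha).trans hk
            refine (Subgroup.commutator_mono hXa (hYle b)).trans ?_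
            rw [show VV (i+2) = ⁅VV (i+1), V⁆ from rfl]
          · have hYb : Y b ≤ VV 1 := (iterComm_le_of_le hVN hTN hb).trans hd
            refine (Subgroup.commutator_mono (hXle a) hYb).trans ?_
            refine (hgg 1 i).trans (le_of_eq ?_)
            congr 1
        -- step for pairs
        have hstep : ∀ a b, ⁅W a b, (⊤ : Subgroup H)⁆ ≤ W (a+1) b ⊔ W a (b+1) := by
          intro a b
          haveI := hWN (a+1) b; haveI := hWN a (b+1)
          haveI : (W (a+1) b ⊔ W a (b+1)).Normal := Subgroup.sup_normal _ _
          refine myThreeSubgroups ?_ ?_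
          · rw [show (⁅Y b, (⊤ : Subgroup H)⁆ : Subgroup H) = Y (b+1) from rfl,
              Subgroup.commutator_comm]
            exact le_sup_right
          · rw [Subgroup.commutator_comm (⊤ : Subgroup H) (X a),
              show (⁅X a, (⊤ : Subgroup H)⁆ : Subgroup H) = X (a+1) from rfl]
            exact le_sup_left
        -- the join of all W a b with a+b = m
        set SW : ℕ → Subgroup H := fun m =>
          ⨆ (p : ℕ × ℕ) (_ : p.1 + p.2 = m), W p.1 p.2 with hSWdef
        haveI hSWN : ∀ m, (SW m).Normal := by
          intro m
          refine iSup_normal _ fun p => iSup_normal _ fun _ => hWN p.1 p.2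
        have hSWle : ∀ m, iterComm ⊤ (VV (i+1)) m ≤ SW m := by
          intro m
          induction m with
          | zero =>
              rw [show iterComm ⊤ (VV (i+1)) 0 = VV (i+1) from rfl,
                show VV (i+1) = ⁅VV i, V⁆ from rfl]
              have : ⁅VV i, V⁆ = W 0 0 := rfl
              rw [this]
              exact le_iSup_of_le (0,0) (le_iSup_of_le rfl le_rfl)
          | succ m ih =>
              rw [show iterComm ⊤ (VV (i+1)) (m+1) = ⁅iterComm ⊤ (VV (i+1)) m, ⊤⁆ from rfl]
              haveI := hSWN (m+1)
              refine le_trans (Subgroup.commutator_mono ih le_rfl) ?_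
              refine myCommiSupLe fun p => ?_
              refine myCommiSupLe fun hp => ?_
              refine (hstep p.1 p.2).trans ?_
              refine sup_le ?_ ?_
              · exact le_iSup_of_le (p.1+1, p.2) (le_iSup_of_le (by omega) le_rfl)
              · exact le_iSup_of_le (p.1, p.2+1) (le_iSup_of_le (by omega) le_rfl)
        refine ⟨k + d, (hSWle (k+d)).trans ?_⟩
        refine iSup_le fun p => iSup_le fun hp => ?_
        exact hbound p.1 p.2 (by omega)
  -- final assembly
  have hFIN : ∀ r, ∃ m, (⊤ : Subgroup H).lowerCentralSeries m ≤ VV r := by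
    intro r
    induction r with
    | zero =>
        refine ⟨1, ?_⟩
        rw [show (⊤ : Subgroup H).lowerCentralSeries 1 = ⁅(⊤ : Subgroup H).lowerCentralSeries 0, ⊤⁆ from rfl,
          Subgroup.lowerCentralSeries_zero]
        exact le_rfl
    | succ r ih =>
        obtain ⟨m, hm⟩ := ih
        obtain ⟨k, hk⟩ := hU r
        refine ⟨m + k, ?_⟩
        rw [lcs_add_eq_iterComm]
        exact (iterComm_mono le_rfl hm k).trans hk
  obtain ⟨m, hm⟩ := hFIN e
  exact ⟨m, le_bot_iff.mp (he ▸ hm)⟩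

end Glue
section LemL
variable {H : Type*} [Group H]

theorem commutator_le_self' (A : Subgroup H) : ⁅A, A⁆ ≤ A := by
  rw [Subgroup.commutator_le]
  intro g1 h1 g2 h2
  rw [commutatorElement_def]
  exact mul_mem (mul_mem (mul_mem h1 h2) (inv_mem h1)) (inv_mem h2)

/-- If `⁅K,K⁆` equals the derived subgroup of `H` and `K` is "nilpotent" (its ambient
iterated commutator series vanishes), then `H` is nilpotent. -/
theorem lemL (K : Subgroup H)
    (hc : ⁅K, K⁆ = ⁅(⊤ : Subgroup H), (⊤ : Subgroup H)⁆)
    (e : ℕ) (hKe : iterComm K K e = ⊥) :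
    ∃ m, (⊤ : Subgroup H).lowerCentralSeries m = ⊥ := by
  haveI hVN : (⁅(⊤ : Subgroup H), (⊤ : Subgroup H)⁆).Normal := Subgroup.commutator_normal ⊤ ⊤
  haveI hV2N : (⁅(⁅(⊤ : Subgroup H), (⊤ : Subgroup H)⁆ : Subgroup H),
      ⁅(⊤ : Subgroup H), (⊤ : Subgroup H)⁆⁆).Normal := Subgroup.commutator_normal _ _
  set V2 : Subgroup H := ⁅(⁅(⊤ : Subgroup H), (⊤ : Subgroup H)⁆ : Subgroup H),
      ⁅(⊤ : Subgroup H), (⊤ : Subgroup H)⁆⁆ with hV2def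
  let π := QuotientGroup.mk' V2
  have hπsurj : Function.Surjective π := QuotientGroup.mk'_surjective V2
  have hmaptop : (⊤ : Subgroup H).map π = ⊤ := Subgroup.map_top_of_surjective π hπsurj
  have hmapV : (⁅(⊤ : Subgroup H), (⊤ : Subgroup H)⁆).map π
      = ⁅(⊤ : Subgroup (H ⧸ V2)), ⊤⁆ := by
    rw [Subgroup.map_commutator, hmaptop]
  have hE1 : (⊤ : Subgroup (H ⧸ V2)).lowerCentralSeries (1 + e) = ⊥ := by
    refine E1lemma (K.map π) ?_ ?_ e ?_
    · rw [← Subgroup.map_commutator, ← hmapV, ← hc]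
    · rw [← hmapV, ← Subgroup.map_commutator]
      rw [Subgroup.map_eq_bot_iff, QuotientGroup.ker_mk']
    · rw [← iterComm_map, Subgroup.map_eq_bot_iff, QuotientGroup.ker_mk', hKe]
      exact bot_le
  have hpull : (⊤ : Subgroup H).lowerCentralSeries (1 + e) ≤ V2 := by
    have h0 : ((⊤ : Subgroup H).lowerCentralSeries (1+e)).map π = ⊥ := by
      rw [lcs_eq_iterComm, iterComm_map, hmaptop, ← lcs_eq_iterComm, hE1]
    rwa [Subgroup.map_eq_bot_iff, QuotientGroup.ker_mk'] at h0
  have hlcs1 : (⊤ : Subgroup H).lowerCentralSeries 1 = ⁅(⊤ : Subgroup H), (⊤ : Subgroup H)⁆ := by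
    rw [show (⊤ : Subgroup H).lowerCentralSeries 1 = ⁅(⊤ : Subgroup H).lowerCentralSeries 0, ⊤⁆ from rfl,
      Subgroup.lowerCentralSeries_zero]
  have hd : iterComm ⊤ (⁅(⊤ : Subgroup H), (⊤ : Subgroup H)⁆) e ≤
      iterComm ⁅(⊤ : Subgroup H), (⊤ : Subgroup H)⁆ ⁅(⊤ : Subgroup H), (⊤ : Subgroup H)⁆ 1 := by
    have h1 : iterComm ⊤ (⁅(⊤ : Subgroup H), (⊤ : Subgroup H)⁆) e
        = (⊤ : Subgroup H).lowerCentralSeries (1+e) := by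
      rw [lcs_add_eq_iterComm, hlcs1]
    rw [h1]
    refine hpull.trans (le_of_eq ?_)
    rw [hV2def]
    rfl
  have hVK : (⁅(⊤ : Subgroup H), (⊤ : Subgroup H)⁆ : Subgroup H) ≤ K := by
    rw [← hc]; exact commutator_le_self' K
  have hVVle : ∀ j, iterComm ⁅(⊤ : Subgroup H), (⊤ : Subgroup H)⁆
      ⁅(⊤ : Subgroup H), (⊤ : Subgroup H)⁆ j ≤ iterComm K K (j+1) := by
    intro j
    induction j with
    | zero =>
        rw [show iterComm K K 1 = ⁅K,K⁆ from rfl, hc]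
        exact le_rfl
    | succ j ih =>
        rw [iterComm_succ, iterComm_succ]
        exact Subgroup.commutator_mono ih hVK
  have he' : iterComm ⁅(⊤ : Subgroup H), (⊤ : Subgroup H)⁆
      ⁅(⊤ : Subgroup H), (⊤ : Subgroup H)⁆ e = ⊥ := by
    refine le_bot_iff.mp ((hVVle e).trans ?_)
    rw [iterComm_succ, hKe]
    exact le_of_eq (Subgroup.commutator_bot_left K)
  exact hallGlue e e hd he'

end LemL

section KeyStep
variable {Gi : Type*} [Group Gi]

theorem keyStep (K Hs P : Subgroup Gi) [P.Normal]
    (hKH : K ≤ Hs) (hcomm : ⁅Hs, Hs⁆ = ⁅K, K⁆) (c : ℕ) (hKc : iterComm K K c ≤ P) :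
    ∃ m, iterComm Hs Hs m ≤ P := by
  set φ := QuotientGroup.mk' P with hφdef
  set H' : Subgroup (Gi ⧸ P) := Hs.map φ with hH'def
  set K' : Subgroup (Gi ⧸ P) := K.map φ with hK'def
  have hK'H' : K' ≤ H' := Subgroup.map_mono hKH
  have hinj : Function.Injective H'.subtype := H'.subtype_injective
  -- commutator condition in the subgroup H'
  have hms : (K'.subgroupOf H').map H'.subtype = K' := by
    rw [Subgroup.subgroupOf_map_subtype, inf_eq_left.mpr hK'H']
  have hcomm' : ⁅K'.subgroupOf H', K'.subgroupOf H'⁆ =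
      ⁅(⊤ : Subgroup H'), (⊤ : Subgroup H')⁆ := by
    apply Subgroup.map_injective hinj
    rw [Subgroup.map_commutator, Subgroup.map_commutator, hms,
      ← MonoidHom.range_eq_map, H'.range_subtype, hH'def, hK'def,
      ← Subgroup.map_commutator, ← Subgroup.map_commutator, hcomm]
  -- nilpotency condition
  have hKe' : iterComm (K'.subgroupOf H') (K'.subgroupOf H') c = ⊥ := by
    have h1 : (iterComm (K'.subgroupOf H') (K'.subgroupOf H') c).map H'.subtype = ⊥ := by
      rw [iterComm_map, hms, hK'def, ← iterComm_map, Subgroup.map_eq_bot_iff,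
        QuotientGroup.ker_mk']
      exact hKc
    rwa [Subgroup.map_eq_bot_iff, Subgroup.ker_subtype, le_bot_iff] at h1
  obtain ⟨m, hm⟩ := lemL (K'.subgroupOf H') hcomm' c hKe'
  refine ⟨m, ?_⟩
  have h4 : iterComm H' H' m = ⊥ := by
    rw [← map_subtype_lcs, hm]
    exact Subgroup.map_bot _
  have h2 : (iterComm Hs Hs m).map φ = ⊥ := by
    rw [iterComm_map]
    exact h4
  rwa [Subgroup.map_eq_bot_iff, QuotientGroup.ker_mk'] at h2

end KeyStep
section IterSelf
variable {G : Type*} [Group G]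

theorem map_conj_iterComm_self {T : Subgroup G} {t : G} (ht : t ∈ T) (n : ℕ) :
    (iterComm T T n).map (MulAut.conj t).toMonoidHom = iterComm T T n := by
  have hT : T.map (MulAut.conj t).toMonoidHom = T := by
    apply le_antisymm
    · rintro x ⟨y, hy, rfl⟩
      simpa [MulAut.conj] using mul_mem (mul_mem ht hy) (inv_mem ht)
    · intro x hx
      refine ⟨t⁻¹ * x * t, mul_mem (mul_mem (inv_mem ht) hx) ht, ?_⟩
      simp [MulAut.conj]; group
  induction n with
  | zero => exact hT
  | succ n ih => rw [iterComm_succ, Subgroup.map_commutator, ih, hT]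

theorem iterComm_self_succ_le (T : Subgroup G) (n : ℕ) :
    iterComm T T (n+1) ≤ iterComm T T n := by
  rw [iterComm_succ, Subgroup.commutator_le]
  intro x hx s hs
  have hconj : s⁻¹ * x⁻¹ * s ∈ iterComm T T n := by
    have := map_conj_iterComm_self (inv_mem hs) n
    rw [← this]
    exact ⟨x⁻¹, inv_mem hx, by simp [MulAut.conj]⟩
  have : ⁅x, s⁆ = x * (s * x⁻¹ * s⁻¹) := by group
  rw [this]
  have h2 : s * x⁻¹ * s⁻¹ ∈ iterComm T T n := by
    have := map_conj_iterComm_self hs n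
    rw [← this]
    exact ⟨x⁻¹, inv_mem hx, by simp [MulAut.conj]⟩
  exact mul_mem hx h2

theorem iterComm_self_antitone (T : Subgroup G) {a b : ℕ} (h : a ≤ b) :
    iterComm T T b ≤ iterComm T T a := by
  induction b with
  | zero => simpa [Nat.le_zero.mp h] using le_rfl
  | succ b ih =>
      rcases Nat.lt_or_ge a (b+1) with hlt | hge
      · exact (iterComm_self_succ_le T b).trans (ih (Nat.lt_succ_iff.mp hlt))
      · have : a = b+1 := le_antisymm h hge
        subst this; exact le_rfl

end IterSelf

section Subdirect
variable {n : ℕ} {G : Fin n → Type*} [∀ i, Group (G i)] {S : Subgroup (∀ i, G i)}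

theorem mem_projKer {J : Finset (Fin n)} {x : ∀ j, G j} :
    x ∈ projKer G S J ↔ x ∈ S ∧ ∀ j ∈ J, x j = 1 := by
  simp [projKer, Subgroup.mem_iInf, MonoidHom.mem_ker, Pi.evalMonoidHom_apply]

theorem NJ_mono (i : Fin n) {J J' : Finset (Fin n)} (h : J ⊆ J') :
    NJ G S i J' ≤ NJ G S i J := by
  refine Subgroup.map_mono ?_
  intro x hx
  rw [mem_projKer] at hx ⊢
  exact ⟨hx.1, fun j hj => hx.2 j (h hj)⟩

theorem NJ_normal (i : Fin n) (hsub : S.map (Pi.evalMonoidHom G i) = ⊤)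
    (J : Finset (Fin n)) : (NJ G S i J).Normal := by
  constructor
  intro x hx g
  rw [NJ, Subgroup.mem_map] at hx
  obtain ⟨s, hs, rfl⟩ := hx
  have hg : g ∈ S.map (Pi.evalMonoidHom G i) := by rw [hsub]; exact Subgroup.mem_top g
  rw [Subgroup.mem_map] at hg
  obtain ⟨t, ht, rfl⟩ := hg
  rw [mem_projKer] at hs
  refine Subgroup.mem_map.mpr ⟨t * s * t⁻¹, ?_, by simp⟩
  rw [mem_projKer]
  refine ⟨mul_mem (mul_mem ht hs.1) (inv_mem ht), fun j hj => ?_⟩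
  simp [hs.2 j hj]

theorem NJ_bracket (i : Fin n) {A B : Finset (Fin n)} :
    ⁅NJ G S i A, NJ G S i B⁆ ≤ NJ G S i (A ∪ B) := by
  rw [Subgroup.commutator_le]
  intro x hx y hy
  rw [NJ, Subgroup.mem_map] at hx hy
  obtain ⟨a, ha, rfl⟩ := hx
  obtain ⟨b, hb, rfl⟩ := hy
  rw [mem_projKer] at ha hb
  refine Subgroup.mem_map.mpr ⟨⁅a, b⁆, ?_, by simp [commutatorElement_def]⟩
  rw [mem_projKer]
  constructor
  · rw [commutatorElement_def]
    exact mul_mem (mul_mem (mul_mem ha.1 hb.1) (inv_mem ha.1)) (inv_mem hb.1)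
  · intro j hj
    rcases Finset.mem_union.mp hj with h | h
    · simp [commutatorElement_def, ha.2 j h]
    · simp [commutatorElement_def, hb.2 j h]

theorem UJ_normal (i : Fin n) (hsub : S.map (Pi.evalMonoidHom G i) = ⊤)
    (J : Finset (Fin n)) : (UJ G S i J).Normal := by
  refine iSup_normal _ fun l => iSup_normal _ fun _ => NJ_normal i hsub {l}

theorem NJl_le_UJ (i : Fin n) {J : Finset (Fin n)} {l : Fin n} (hl : l ∈ J) :
    NJ G S i {l} ≤ UJ G S i J :=
  le_iSup_of_le l (le_iSup_of_le hl le_rfl)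

theorem Li_eq_NJ (i : Fin n) : Li G S i = NJ G S i ({i}ᶜ) := by
  unfold Li NJ
  congr 1
  unfold projKer
  congr 1
  ext x
  simp only [Subgroup.mem_iInf, MonoidHom.mem_ker, Pi.evalMonoidHom_apply,
    MonoidHom.mem_range, Finset.mem_compl, Finset.mem_singleton]
  constructor
  · rintro ⟨g, rfl⟩ j hj
    simp [MonoidHom.mulSingle_apply, Pi.mulSingle, Function.update, hj]
  · intro h
    refine ⟨x i, ?_⟩
    ext j
    by_cases hj : j = i
    · subst hj; simp [MonoidHom.mulSingle_apply]
    · simp [MonoidHom.mulSingle_apply, Pi.mulSingle, Function.update, hj, h j hj]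

theorem bracket_A_UJ_le (i : Fin n) (hsub : S.map (Pi.evalMonoidHom G i) = ⊤)
    (J : Finset (Fin n)) (A : Subgroup (G i))
    (hA : ∀ l ∈ J, A ≤ NJ G S i (J.erase l)) :
    ⁅A, UJ G S i J⁆ ≤ NJ G S i J := by
  haveI hN : (NJ G S i J).Normal := NJ_normal i hsub J
  rw [Subgroup.commutator_le]
  intro a ha u hu
  set φ := QuotientGroup.mk' (NJ G S i J) with hφ
  have hcent : (UJ G S i J).map φ ≤ Subgroup.centralizer {φ a} := by
    rw [UJ]
    rw [Subgroup.map_iSup]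
    refine iSup_le fun l => ?_
    rw [Subgroup.map_iSup]
    refine iSup_le fun hl => ?_
    rintro y ⟨x, hx, rfl⟩
    rw [Subgroup.mem_centralizer_iff]
    rintro z rfl
    have hbr : ⁅NJ G S i (J.erase l), NJ G S i {l}⁆ ≤ NJ G S i J := by
      refine (NJ_bracket i).trans (le_of_eq ?_)
      congr 1
      rw [Finset.union_comm, ← Finset.insert_eq, Finset.insert_erase hl]
    exact (commute_mk' hbr (hA l hl ha) hx).eq
  have hu' : φ u ∈ Subgroup.centralizer {φ a} :=
    hcent ⟨u, hu, rfl⟩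
  have hcomm : Commute (φ a) (φ u) := by
    rw [Subgroup.mem_centralizer_iff] at hu'
    exact hu' (φ a) rfl
  have h1 : φ ⁅a, u⁆ = 1 := by
    rw [map_commutatorElement]
    exact commutatorElement_eq_one_iff_commute.mpr hcomm
  rwa [← QuotientGroup.ker_mk' (NJ G S i J), MonoidHom.mem_ker]

end Subdirect
/-- Let `S` be a full subdirect product of `G₁ × ⋯ × Gₙ` and fix `i`.
If (1) `G_i ⧸ N_{{k}}^{(i)}` is virtually abelian for each `k ≠ i`, and (2) for each
nonempty `J ⊆ I \ {i}` and each finite-index subgroup `K ≤ U_J(1)^{(i)}` there is a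
finite-index subgroup `H_K ≤ G_i` with `K ≤ H_K` and `⁅H_K, H_K⁆ = ⁅K, K⁆`, then
`G_i ⧸ L_i` is virtually nilpotent. -/
theorem quotient_Li_virtuallyNilpotent {n : ℕ} (hn : 2 ≤ n)
    (G : Fin n → Type*) [∀ i, Group (G i)] (S : Subgroup (∀ i, G i))
    (hsubdirect : ∀ i, S.map (Pi.evalMonoidHom G i) = ⊤)
    (hfull : ∀ i, S ⊓ (MonoidHom.mulSingle G i).range ≠ ⊥)
    (i : Fin n)
    (h1 : ∀ k : Fin n, k ≠ i → QuotVirtuallyAbelian (NJ G S i {k}))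
    (h2 : ∀ J : Finset (Fin n), J.Nonempty → i ∉ J →
      ∀ K : Subgroup (G i), K ≤ UJ G S i J → K.relIndex (UJ G S i J) ≠ 0 →
        ∃ H : Subgroup (G i), H.FiniteIndex ∧ K ≤ H ∧ ⁅H, H⁆ = ⁅K, K⁆) :
    QuotVirtuallyNilpotent (Li G S i) := by
  classical
  have KEY : ∀ m : ℕ, ∀ J : Finset (Fin n), J.card ≤ m → J.Nonempty → i ∉ J →
      ∃ T : Subgroup (G i), T.FiniteIndex ∧ ∃ c, iterComm T T c ≤ NJ G S i J := by
    intro m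
    induction m with
    | zero =>
        intro J hcard hne _
        have := Finset.card_pos.mpr hne
        omega
    | succ m IH =>
        intro J hcard hne hiJ
        rcases Nat.lt_or_ge J.card (m+1) with hlt | hge
        · exact IH J (by omega) hne hiJ
        rcases eq_or_lt_of_le (show 1 ≤ J.card from Finset.card_pos.mpr hne) with hone | h2c
        · -- singleton case
          obtain ⟨k, rfl⟩ := Finset.card_eq_one.mp hone.symm
          have hki : k ≠ i := fun h => hiJ (h ▸ Finset.mem_singleton_self k)
          obtain ⟨Hb, hNle, hfin, hHH⟩ := h1 k hki
          refine ⟨Hb, hfin, 1, ?_⟩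
          rw [show iterComm Hb Hb 1 = ⁅Hb, Hb⁆ from rfl]
          exact hHH
        · -- card ≥ 2 step
          have hstep : ∀ l ∈ J, ∃ T : Subgroup (G i), T.FiniteIndex ∧
              ∃ c, iterComm T T c ≤ NJ G S i (J.erase l) := by
            intro l hl
            refine IH (J.erase l) ?_ ?_ ?_
            · rw [Finset.card_erase_of_mem hl]; omega
            · rw [← Finset.card_pos, Finset.card_erase_of_mem hl]; omega
            · exact fun hmem => hiJ (Finset.mem_of_mem_erase hmem)
          choose T hTfin hcex using hstep
          choose c hc using hcex
          haveI : Finite {l // l ∈ J} := Subtype.finite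
          set T0 : Subgroup (G i) := ⨅ (x : {l // l ∈ J}), T x.1 x.2 with hT0
          haveI hT0fin : T0.FiniteIndex :=
            Subgroup.finiteIndex_iInf fun x => hTfin x.1 x.2
          set c0 : ℕ := J.attach.sup (fun x => c x.1 x.2) with hc0def
          have hc0 : ∀ (x : {l // l ∈ J}), c x.1 x.2 ≤ c0 :=
            fun x => Finset.le_sup (f := fun x : {l // l ∈ J} => c x.1 x.2) (Finset.mem_attach J x)
          have hA : ∀ l ∈ J, iterComm T0 T0 c0 ≤ NJ G S i (J.erase l) := by
            intro l hl
            have hle : T0 ≤ T l hl := iInf_le (fun x : {l // l ∈ J} => T x.1 x.2) ⟨l, hl⟩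
            refine le_trans (iterComm_mono hle hle c0) ?_
            exact le_trans (iterComm_self_antitone (T l hl) (hc0 ⟨l,hl⟩)) (hc l hl)
          set K : Subgroup (G i) := T0 ⊓ UJ G S i J with hKdef
          have hKU : K ≤ UJ G S i J := inf_le_right
          have hKc : iterComm K K (c0+1) ≤ NJ G S i J := by
            rw [iterComm_succ]
            calc ⁅iterComm K K c0, K⁆
                ≤ ⁅iterComm T0 T0 c0, UJ G S i J⁆ :=
                  Subgroup.commutator_mono (iterComm_mono inf_le_left inf_le_left c0) hKU
              _ ≤ NJ G S i J := bracket_A_UJ_le i (hsubdirect i) J _ hA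
          have hrel : K.relIndex (UJ G S i J) ≠ 0 := by
            rw [hKdef, Subgroup.inf_relIndex_right]
            haveI : (T0.subgroupOf (UJ G S i J)).FiniteIndex := inferInstance
            exact Subgroup.FiniteIndex.index_ne_zero
          obtain ⟨Hs, hHsfin, hKHs, hHscomm⟩ := h2 J hne hiJ K hKU hrel
          haveI : (NJ G S i J).Normal := NJ_normal i (hsubdirect i) J
          obtain ⟨mm, hmm⟩ := keyStep K Hs (NJ G S i J) hKHs hHscomm (c0+1) hKc
          exact ⟨Hs, hHsfin, mm, hmm⟩
  -- apply to J = {i}ᶜ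
  have hJne : ({i}ᶜ : Finset (Fin n)).Nonempty := by
    rw [← Finset.card_pos, Finset.card_compl, Finset.card_singleton]
    simp only [Fintype.card_fin]
    omega
  have hinot : i ∉ ({i}ᶜ : Finset (Fin n)) := by simp
  obtain ⟨T, hTfin, cc, hT⟩ := KEY (({i}ᶜ : Finset (Fin n)).card) ({i}ᶜ) le_rfl hJne hinot
  rw [← Li_eq_NJ i] at hT
  haveI hLiN : (Li G S i).Normal := by
    rw [Li_eq_NJ i]; exact NJ_normal i (hsubdirect i) _
  set φ := QuotientGroup.mk' (Li G S i) with hφ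
  refine ⟨(T.map φ).comap φ, ?_, ?_, cc, ?_⟩
  · intro x hx
    have hx1 : φ x = 1 := by
      rw [← MonoidHom.mem_ker, QuotientGroup.ker_mk']; exact hx
    rw [Subgroup.mem_comap, hx1]
    exact Subgroup.one_mem _
  · haveI := hTfin
    exact Subgroup.finiteIndex_of_le (Subgroup.le_comap_map _ _)
  · rw [map_subtype_lcs]
    have hmapH : ((T.map φ).comap φ).map φ = T.map φ :=
      Subgroup.map_comap_eq_self_of_surjective (QuotientGroup.mk'_surjective _) _
    have hbot : (iterComm ((T.map φ).comap φ) ((T.map φ).comap φ) cc).map φ = ⊥ := by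
      rw [iterComm_map, hmapH, ← iterComm_map, Subgroup.map_eq_bot_iff, QuotientGroup.ker_mk']
      exact hT
    rwa [Subgroup.map_eq_bot_iff, QuotientGroup.ker_mk'] at hbot
end

section
/- Let S ≤ G₁ × ⋯ × Gₙ be a full subdirect product and fix i ∈ I. Assume that: (1) for each k ∈ I∖{i}, the quotient G_i / N_{{k}}^{(i)} is virtually abelian; and (2) for each nonempty J ⊆ I∖{i} and each finite-index subgroup K of U_J(1)^{(i)}, there is a finite-index subgroup H_K of G_i such that K ≤ H_K and ⁅H_K, H_K⁆ = ⁅K, K⁆. Then for every nonempty subset J ⊆ I∖{i}, the quotient G_i / N_J^{(i)} is virtually nilpotent. -/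
namespace St3
open scoped commutatorElement
section Generic
variable {Γ : Type*} [Group Γ]


/-- `gam H r = γ_{r+1}(H)` as a subgroup of the ambient group. -/
def gam (H : Subgroup Γ) : ℕ → Subgroup Γ
  | 0 => H
  | r+1 => ⁅gam H r, H⁆

lemma gam_succ (H : Subgroup Γ) (r : ℕ) : gam H (r+1) = ⁅gam H r, H⁆ := rfl

lemma gam_mono {H K : Subgroup Γ} (h : H ≤ K) : ∀ r, gam H r ≤ gam K r
  | 0 => h
  | r+1 => Subgroup.commutator_mono (gam_mono h r) h

lemma lcs_map_eq (H : Subgroup Γ) : ∀ r, ((⊤ : Subgroup H).lowerCentralSeries r).map H.subtype = gam H r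
  | 0 => by
      rw [Subgroup.lowerCentralSeries_zero]
      show Subgroup.map H.subtype ⊤ = H
      rw [← MonoidHom.range_eq_map, H.range_subtype]
  | r+1 => by
      show Subgroup.map H.subtype ⁅(⊤ : Subgroup H).lowerCentralSeries r, (⊤ : Subgroup H)⁆ = _
      rw [Subgroup.map_commutator, lcs_map_eq H r, gam_succ, ← MonoidHom.range_eq_map,
        H.range_subtype]

lemma gam_map {Λ : Type*} [Group Λ] (f : Γ →* Λ) (H : Subgroup Γ) :
    ∀ r, (gam H r).map f = gam (H.map f) r
  | 0 => rfl
  | r+1 => by rw [gam_succ, Subgroup.map_commutator, gam_map f H r, gam_succ]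

lemma gam_antitone {H : Subgroup Γ} : ∀ {a b : ℕ}, a ≤ b → gam H b ≤ gam H a := by
  intro a b hab
  rw [← lcs_map_eq, ← lcs_map_eq]
  exact Subgroup.map_mono (Subgroup.lowerCentralSeries_antitone _ hab)

/-- Three subgroups lemma relative to a normal subgroup. -/
lemma tsl {A B C N : Subgroup Γ} (hN : N.Normal) (h1 : ⁅⁅B, C⁆, A⁆ ≤ N)
    (h2 : ⁅⁅C, A⁆, B⁆ ≤ N) : ⁅⁅A, B⁆, C⁆ ≤ N := by
  haveI := hN
  set q := QuotientGroup.mk' N with hq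
  have key : ∀ {X : Subgroup Γ}, X ≤ N ↔ X.map q = ⊥ := by
    intro X
    rw [Subgroup.map_eq_bot_iff, QuotientGroup.ker_mk']
  rw [key]
  rw [Subgroup.map_commutator, Subgroup.map_commutator]
  apply Subgroup.commutator_commutator_eq_bot_of_rotate
  · rw [← Subgroup.map_commutator, ← Subgroup.map_commutator, ← key]; exact h1
  · rw [← Subgroup.map_commutator, ← Subgroup.map_commutator, ← key]; exact h2

lemma gam_normal {K : Subgroup Γ} (hK : K.Normal) : ∀ r, (gam K r).Normal
  | 0 => hK
  | r+1 => by
      haveI := gam_normal hK r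
      haveI := hK
      exact Subgroup.commutator_normal _ _

/-- `⁅γ_{a+1}(K), γ_{b+1}(K)⁆ ≤ γ_{a+b+2}(K)` for `K` normal. -/
lemma gam_comm_gam_le {K : Subgroup Γ} (hK : K.Normal) :
    ∀ b a, ⁅gam K a, gam K b⁆ ≤ gam K (a+b+1)
  | 0, a => le_of_eq (by rw [Nat.add_zero]; rfl)
  | b+1, a => by
      rw [Subgroup.commutator_comm, gam_succ]
      have hN : (gam K (a+(b+1)+1)).Normal := gam_normal hK _
      apply tsl hN
      · have h1 : ⁅K, gam K a⁆ = gam K (a+1) := by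
          rw [Subgroup.commutator_comm]; rfl
        rw [h1]
        have := gam_comm_gam_le hK b (a+1)
        have he : a+1+b+1 = a+(b+1)+1 := by omega
        rwa [he] at this
      · calc ⁅⁅gam K a, gam K b⁆, K⁆ ≤ ⁅gam K (a+b+1), K⁆ :=
              Subgroup.commutator_mono (gam_comm_gam_le hK b a) le_rfl
          _ = gam K (a+b+2) := rfl
          _ ≤ gam K (a+(b+1)+1) := le_of_eq (congrArg (gam K) (by omega))

/-- Key lemma: if `K ≤ H`, `K` is normal in the ambient group, and `⁅H,H⁆ = ⁅K,K⁆`,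
then `γ_{r+2}(H) ≤ γ_{r+2}(K)` for all `r`. -/
lemma gam_le_gam_of_commutator_eq {K H : Subgroup Γ} (hK : K.Normal) (hKH : K ≤ H)
    (hc : ⁅H, H⁆ = ⁅K, K⁆) : ∀ r, gam H (r+1) ≤ gam K (r+1)
  | 0 => le_of_eq hc
  | r+1 => by
      have IH := gam_le_gam_of_commutator_eq hK hKH hc r
      have step1 : gam H (r+2) ≤ ⁅gam K (r+1), H⁆ := by
        rw [gam_succ]
        exact Subgroup.commutator_mono IH le_rfl
      have hN : (gam K (r+2)).Normal := gam_normal hK _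
      refine le_trans step1 ?_
      have hshape : (⁅gam K r, K⁆ : Subgroup Γ) = gam K (r+1) := rfl
      rw [← hshape]
      apply tsl hN
      · -- ⁅⁅K, H⁆, gam K r⁆ ≤ gam K (r+2)
        have h1 : ⁅K, H⁆ ≤ gam K 1 := by
          calc ⁅K, H⁆ ≤ ⁅H, H⁆ := Subgroup.commutator_mono hKH le_rfl
            _ = ⁅K, K⁆ := hc
            _ = gam K 1 := rfl
        calc ⁅⁅K, H⁆, gam K r⁆ ≤ ⁅gam K 1, gam K r⁆ :=
              Subgroup.commutator_mono h1 le_rfl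
          _ ≤ gam K (1+r+1) := gam_comm_gam_le hK r 1
          _ = gam K (r+2) := congrArg (gam K) (by omega)
      · -- ⁅⁅H, gam K r⁆, K⁆ ≤ gam K (r+2)
        have h2 : ⁅H, gam K r⁆ ≤ gam K (r+1) := by
          rw [Subgroup.commutator_comm]
          calc ⁅gam K r, H⁆ ≤ ⁅gam H r, H⁆ :=
                Subgroup.commutator_mono (gam_mono hKH r) le_rfl
            _ = gam H (r+1) := rfl
            _ ≤ gam K (r+1) := IH
        calc ⁅⁅H, gam K r⁆, K⁆ ≤ ⁅gam K (r+1), K⁆ :=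
              Subgroup.commutator_mono h2 le_rfl
          _ = gam K (r+2) := rfl

lemma normal_iSup {ι : Sort*} (f : ι → Subgroup Γ) (h : ∀ i, (f i).Normal) :
    (⨆ i, f i).Normal := by
  constructor
  intro x hx g
  refine Subgroup.iSup_induction f (C := fun y => g * y * g⁻¹ ∈ ⨆ i, f i) hx ?_ ?_ ?_
  · intro i y hy
    exact le_iSup f i ((h i).conj_mem y hy g)
  · simpa using Subgroup.one_mem _
  · intro y z hy hz
    have : g * (y * z) * g⁻¹ = (g * y * g⁻¹) * (g * z * g⁻¹) := by group
    rw [this]; exact Subgroup.mul_mem _ hy hz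

lemma normal_iInf {ι : Sort*} (f : ι → Subgroup Γ) (h : ∀ i, (f i).Normal) :
    (⨅ i, f i).Normal := by
  constructor
  intro x hx g
  rw [Subgroup.mem_iInf] at hx ⊢
  exact fun i => (h i).conj_mem x (hx i) g

lemma normal_inf {A B : Subgroup Γ} (hA : A.Normal) (hB : B.Normal) : (A ⊓ B).Normal := by
  constructor
  intro x hx g
  exact ⟨hA.conj_mem x hx.1 g, hB.conj_mem x hx.2 g⟩

lemma commutator_iSup_le {ι : Sort*} {X M : Subgroup Γ} (hM : M.Normal) (f : ι → Subgroup Γ)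
    (h : ∀ i, ⁅X, f i⁆ ≤ M) : ⁅X, ⨆ i, f i⁆ ≤ M := by
  rw [Subgroup.commutator_le]
  intro x hx u hu
  refine Subgroup.iSup_induction f (C := fun u => ⁅x, u⁆ ∈ M) hu ?_ ?_ ?_
  · intro i u hui
    exact h i (Subgroup.commutator_mem_commutator hx hui)
  · simpa using M.one_mem
  · intro u v hu hv
    have : ⁅x, u * v⁆ = ⁅x, u⁆ * (u * ⁅x, v⁆ * u⁻¹) := by group
    rw [this]
    exact M.mul_mem hu (hM.conj_mem _ hv u)


/-- If `γ_{c+1}(H) ≤ N` with `N` normal, then also `γ_{c+1}(H ⊔ N) ≤ N`. -/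
lemma gam_sup_le {N H : Subgroup Γ} (hN : N.Normal) {c : ℕ} (h : gam H c ≤ N) :
    gam (H ⊔ N) c ≤ N := by
  haveI := hN
  set q := QuotientGroup.mk' N with hqdef
  have hker : ∀ {X : Subgroup Γ}, X ≤ N ↔ X.map q = ⊥ := fun {X} => by
    rw [Subgroup.map_eq_bot_iff, QuotientGroup.ker_mk']
  have heq : (gam (H ⊔ N) c).map q = (gam H c).map q := by
    rw [gam_map, gam_map, Subgroup.map_sup, hker.mp (le_refl N), sup_bot_eq]
  rw [hker, heq]
  exact hker.mp h


end Generic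

variable {n : ℕ} {G : Fin n → Type*} [∀ i, Group (G i)] {S : Subgroup (∀ i, G i)}

lemma mem_projKer {t : ∀ i, G i} {J : Finset (Fin n)} :
    t ∈ projKer G S J ↔ t ∈ S ∧ ∀ j ∈ J, t j = 1 := by
  simp [projKer, Subgroup.mem_inf, Subgroup.mem_iInf, MonoidHom.mem_ker]

lemma mem_NJ {i : Fin n} {J : Finset (Fin n)} {x : G i} :
    x ∈ NJ G S i J ↔ ∃ t, (t ∈ S ∧ ∀ j ∈ J, t j = 1) ∧ t i = x := by
  simp [NJ, Subgroup.mem_map, mem_projKer]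

lemma NJ_normal (i : Fin n) (hsub : S.map (Pi.evalMonoidHom G i) = ⊤) (J : Finset (Fin n)) :
    (NJ G S i J).Normal := by
  constructor
  intro x hx g
  obtain ⟨t, ⟨htS, htJ⟩, hti⟩ := mem_NJ.mp hx
  have hg : g ∈ S.map (Pi.evalMonoidHom G i) := by rw [hsub]; trivial
  obtain ⟨s, hsS, hsi⟩ := Subgroup.mem_map.mp hg
  refine mem_NJ.mpr ⟨s * t * s⁻¹, ⟨S.mul_mem (S.mul_mem hsS htS) (S.inv_mem hsS), ?_⟩, ?_⟩
  · intro j hj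
    have := htJ j hj
    simp [Pi.mul_apply, Pi.inv_apply, this]
  · simp only [Pi.mul_apply, Pi.inv_apply]
    rw [hti, show s i = g from hsi]

lemma commutator_NJ_le (i : Fin n) (A B : Finset (Fin n)) :
    ⁅NJ G S i A, NJ G S i B⁆ ≤ NJ G S i (A ∪ B) := by
  rw [Subgroup.commutator_le]
  intro x hx y hy
  obtain ⟨t, ⟨htS, htA⟩, hti⟩ := mem_NJ.mp hx
  obtain ⟨s, ⟨hsS, hsB⟩, hsi⟩ := mem_NJ.mp hy
  refine mem_NJ.mpr ⟨⁅t, s⁆, ⟨?_, ?_⟩, ?_⟩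
  · exact S.mul_mem (S.mul_mem (S.mul_mem htS hsS) (S.inv_mem htS)) (S.inv_mem hsS)
  · intro j hj
    have hcoord : (⁅t, s⁆ : ∀ i, G i) j = ⁅t j, s j⁆ := rfl
    rcases Finset.mem_union.mp hj with h | h
    · rw [hcoord, htA j h]; simp
    · rw [hcoord, hsB j h]; simp
  · have : (⁅t, s⁆ : ∀ i, G i) i = ⁅t i, s i⁆ := rfl
    rw [this, hti, hsi]

lemma NJ_singleton_le_UJ {i l : Fin n} {J : Finset (Fin n)} (hl : l ∈ J) :
    NJ G S i {l} ≤ UJ G S i J := by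
  unfold UJ
  exact le_trans (le_iSup (fun (_ : l ∈ J) => NJ G S i {l}) hl)
    (le_iSup (fun l => ⨆ (_ : l ∈ J), NJ G S i {l}) l)

lemma UJ_normal (i : Fin n) (hsub : S.map (Pi.evalMonoidHom G i) = ⊤) (J : Finset (Fin n)) :
    (UJ G S i J).Normal := by
  apply normal_iSup
  intro l
  apply normal_iSup
  intro _
  exact NJ_normal i hsub {l}

lemma commutator_UJ_le {i : Fin n} {J : Finset (Fin n)} {X M : Subgroup (G i)}
    (hM : M.Normal) (h : ∀ l ∈ J, ⁅X, NJ G S i {l}⁆ ≤ M) : ⁅X, UJ G S i J⁆ ≤ M := by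
  apply commutator_iSup_le hM
  intro l
  apply commutator_iSup_le hM
  intro hl
  exact h l hl

end St3


/-- Let `S` be a full subdirect product of `G₁ × ⋯ × Gₙ` and fix `i`.
If (1) `G_i ⧸ N_{{k}}^{(i)}` is virtually abelian for each `k ≠ i`, and (2) for each
nonempty `J ⊆ I \ {i}` and each finite-index subgroup `K ≤ U_J(1)^{(i)}` there is a
finite-index subgroup `H_K ≤ G_i` with `K ≤ H_K` and `⁅H_K, H_K⁆ = ⁅K, K⁆`, then
`G_i ⧸ N_J^{(i)}` is virtually nilpotent for every nonempty `J ⊆ I \ {i}`. -/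
theorem quotient_NJ_virtuallyNilpotent {n : ℕ} (hn : 2 ≤ n)
    (G : Fin n → Type*) [∀ i, Group (G i)] (S : Subgroup (∀ i, G i))
    (hsubdirect : ∀ i, S.map (Pi.evalMonoidHom G i) = ⊤)
    (hfull : ∀ i, S ⊓ (MonoidHom.mulSingle G i).range ≠ ⊥)
    (i : Fin n)
    (h1 : ∀ k : Fin n, k ≠ i → QuotVirtuallyAbelian (NJ G S i {k}))
    (h2 : ∀ J : Finset (Fin n), J.Nonempty → i ∉ J →
      ∀ K : Subgroup (G i), K ≤ UJ G S i J → K.relIndex (UJ G S i J) ≠ 0 →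
        ∃ H : Subgroup (G i), H.FiniteIndex ∧ K ≤ H ∧ ⁅H, H⁆ = ⁅K, K⁆) :
    ∀ J : Finset (Fin n), J.Nonempty → i ∉ J →
      QuotVirtuallyNilpotent (NJ G S i J) := by
  have aux : ∀ (m : ℕ) (J : Finset (Fin n)), J.card ≤ m → J.Nonempty → i ∉ J →
      ∃ (H : Subgroup (G i)) (c : ℕ), H.FiniteIndex ∧ St3.gam H (c+1) ≤ NJ G S i J := by
    intro m
    induction m with
    | zero =>
      intro J hcard hne _
      have := Finset.card_pos.mpr hne
      omega
    | succ m ih =>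
      intro J hcard hne hiJ
      by_cases h1card : J.card = 1
      · -- base case: J = {k}
        obtain ⟨k, rfl⟩ := Finset.card_eq_one.mp h1card
        have hki : k ≠ i := fun h => hiJ (h ▸ Finset.mem_singleton_self k)
        obtain ⟨H, _, hfi, hHH⟩ := h1 k hki
        refine ⟨H, 0, hfi, ?_⟩
        simpa [St3.gam] using hHH
      · -- inductive step: |J| ≥ 2
        have hc2 : 2 ≤ J.card := by
          have := Finset.card_pos.mpr hne; omega
        have herase : ∀ l, l ∈ J → ∃ (H : Subgroup (G i)) (c : ℕ), H.FiniteIndex ∧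
            St3.gam H (c+1) ≤ NJ G S i (J.erase l) := by
          intro l hl
          apply ih (J.erase l)
          · rw [Finset.card_erase_of_mem hl]; omega
          · rw [← Finset.card_pos, Finset.card_erase_of_mem hl]; omega
          · exact fun h => hiJ (Finset.mem_of_mem_erase h)
        choose Hl cl hfil hgaml using herase
        set C : ℕ := J.attach.sup (fun x => cl x.1 x.2) + 1 with hC
        set D : Subgroup (G i) := ⨅ x : {x // x ∈ J}, (Hl x.1 x.2).normalCore with hD
        haveI hDfi : D.FiniteIndex :=
          Subgroup.finiteIndex_iInf (fun x : {x // x ∈ J} =>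
            @Subgroup.finiteIndex_normalCore _ _ _ (hfil x.1 x.2))
        have hDnormal : D.Normal :=
          St3.normal_iInf _ (fun x => Subgroup.normalCore_normal _)
        set K : Subgroup (G i) := UJ G S i J ⊓ D with hK
        have hKU : K ≤ UJ G S i J := inf_le_left
        have hKnormal : K.Normal :=
          St3.normal_inf (St3.UJ_normal i (hsubdirect i) J) hDnormal
        have hrel : K.relIndex (UJ G S i J) ≠ 0 := by
          have : K.relIndex (UJ G S i J) = D.relIndex (UJ G S i J) := by
            rw [hK, inf_comm, Subgroup.inf_relIndex_right]
          rw [this]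
          exact (Subgroup.instFiniteIndex_subgroupOf D (UJ G S i J)).index_ne_zero
        obtain ⟨H, hHfi, hKH, hcomm⟩ := h2 J hne hiJ K hKU hrel
        -- γ_{C+1}(K) ≤ N_{J \ l} for every l ∈ J
        have hgamC : ∀ l, ∀ hl : l ∈ J, St3.gam K C ≤ NJ G S i (J.erase l) := by
          intro l hl
          have hKHl : K ≤ Hl l hl :=
            le_trans inf_le_right
              (le_trans (iInf_le _ ⟨l, hl⟩) (Subgroup.normalCore_le _))
          have h1 : St3.gam K C ≤ St3.gam (Hl l hl) C := St3.gam_mono hKHl C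
          have h2' : St3.gam (Hl l hl) C ≤ St3.gam (Hl l hl) (cl l hl + 1) := by
            apply St3.gam_antitone
            have : cl l hl ≤ J.attach.sup (fun x => cl x.1 x.2) :=
              Finset.le_sup (f := fun x : {x // x ∈ J} => cl x.1 x.2)
                (Finset.mem_attach J ⟨l, hl⟩)
            omega
          exact le_trans h1 (le_trans h2' (hgaml l hl))
        -- γ_{C+2}(K) ≤ N_J
        haveI hNJnormal : (NJ G S i J).Normal := St3.NJ_normal i (hsubdirect i) J
        have hfinal : St3.gam K (C+1) ≤ NJ G S i J := by
          have hstep : St3.gam K (C+1) ≤ ⁅St3.gam K C, UJ G S i J⁆ := by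
            rw [St3.gam_succ]
            exact Subgroup.commutator_mono le_rfl hKU
          refine le_trans hstep ?_
          apply St3.commutator_UJ_le hNJnormal
          intro l hl
          have hunion : J.erase l ∪ {l} = J := by
            rw [Finset.union_comm, ← Finset.insert_eq, Finset.insert_erase hl]
          calc ⁅St3.gam K C, NJ G S i {l}⁆
              ≤ ⁅NJ G S i (J.erase l), NJ G S i {l}⁆ :=
                Subgroup.commutator_mono (hgamC l hl) le_rfl
            _ ≤ NJ G S i (J.erase l ∪ {l}) := St3.commutator_NJ_le i _ _
            _ = NJ G S i J := by rw [hunion]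
        refine ⟨H, C, hHfi, ?_⟩
        exact le_trans (St3.gam_le_gam_of_commutator_eq hKnormal hKH hcomm C) hfinal
  intro J hne hiJ
  obtain ⟨H, c, hfi, hgam⟩ := aux J.card J le_rfl hne hiJ
  haveI hNJnormal : (NJ G S i J).Normal := St3.NJ_normal i (hsubdirect i) J
  haveI := hfi
  refine ⟨H ⊔ NJ G S i J, le_sup_right, Subgroup.finiteIndex_of_le le_sup_left, c+1, ?_⟩
  rw [St3.lcs_map_eq]
  exact St3.gam_sup_le hNJnormal hgam
end

section
/- Let S ≤ G₁ × ⋯ × Gₙ be a full subdirect product, let i ∈ I, and let J ⊆ I∖{i} be nonempty. For each k ∈ J, set J_k = (J∖{k}) ∪ {i}. If for each k ∈ J the quotient G_k / N_{J_k}^{(k)} is virtually nilpotent, then G_i / N_J^{(i)} is virtually nilpotent. -/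
/-! ### Auxiliary lemmas -/

/-- The lower central series maps onto the lower central series under a surjective hom. -/
lemma lcs_map_eq_of_surjective {G H : Type*} [Group G] [Group H]
    (f : G →* H) (hf : Function.Surjective f) :
    ∀ c : ℕ, ((⊤ : Subgroup G).lowerCentralSeries c).map f = (⊤ : Subgroup H).lowerCentralSeries c
  | 0 => by
      rw [Subgroup.lowerCentralSeries_zero, Subgroup.lowerCentralSeries_zero]
      exact Subgroup.map_top_of_surjective f hf
  | (c + 1) => by
      show Subgroup.map f ⁅(⊤ : Subgroup G).lowerCentralSeries c, ⊤⁆ = ⁅(⊤ : Subgroup H).lowerCentralSeries c, ⊤⁆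
      rw [Subgroup.map_commutator, lcs_map_eq_of_surjective f hf c,
        Subgroup.map_top_of_surjective f hf]

/-- Monotonicity of the (ambient image of the) lower central series in the subgroup. -/
lemma lcs_map_subtype_mono {G : Type*} [Group G] {K K' : Subgroup G} (h : K ≤ K') (c : ℕ) :
    ((⊤ : Subgroup K).lowerCentralSeries c).map K.subtype
      ≤ ((⊤ : Subgroup K').lowerCentralSeries c).map K'.subtype := by
  rw [Subgroup.top_subtype_lowerCentralSeries, Subgroup.top_subtype_lowerCentralSeries]
  induction c with
  | zero => exact h
  | succ d hd =>
    rw [Subgroup.lowerCentralSeries_succ, Subgroup.lowerCentralSeries_succ]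
    exact Subgroup.commutator_mono hd h

/-- The ambient image of the lower central series of an image subgroup. -/
lemma lcs_map_subtype_eq {G H : Type*} [Group G] [Group H] (f : G →* H)
    (K : Subgroup G) (c : ℕ) :
    ((⊤ : Subgroup (K.map f)).lowerCentralSeries c).map (K.map f).subtype
      = (((⊤ : Subgroup K).lowerCentralSeries c).map K.subtype).map f := by
  rw [Subgroup.top_subtype_lowerCentralSeries, Subgroup.top_subtype_lowerCentralSeries,
    Subgroup.map_lowerCentralSeries]

lemma mem_projKer_iff {n : ℕ} (G : Fin n → Type*) [∀ i, Group (G i)]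
    (S : Subgroup (∀ i, G i)) (J : Finset (Fin n)) (t : ∀ i, G i) :
    t ∈ projKer G S J ↔ t ∈ S ∧ ∀ j ∈ J, t j = 1 := by
  simp [projKer, Subgroup.mem_inf, Subgroup.mem_iInf, MonoidHom.mem_ker]

/-- If `t ∈ S` has its `k`-th coordinate in `N_{J_k}^{(k)}` for every `k ∈ J`, then its
`i`-th coordinate lies in `N_J^{(i)}`. -/
lemma mem_NJ_of_coords {n : ℕ} (G : Fin n → Type*) [∀ i, Group (G i)]
    (S : Subgroup (∀ i, G i)) (i : Fin n) (J : Finset (Fin n)) :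
    ∀ T : Finset (Fin n), T ⊆ J → ∀ t, t ∈ S → (∀ k ∈ J, k ∉ T → t k = 1) →
      (∀ k (hk : k ∈ J), t k ∈ NJ G S k (insert i (J.erase k))) → t i ∈ NJ G S i J := by
  classical
  intro T
  induction T using Finset.induction_on with
  | empty =>
    intro _ t htS htriv _
    exact ⟨t, (mem_projKer_iff G S J t).mpr
      ⟨htS, fun j hj => htriv j hj (Finset.notMem_empty j)⟩, rfl⟩
  | @insert a T' ha IH =>
    intro hTJ t htS htriv hmem
    have haJ : a ∈ J := hTJ (Finset.mem_insert_self a T')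
    obtain ⟨u, hu, hua⟩ := hmem a haJ
    obtain ⟨huS, hu1⟩ := (mem_projKer_iff G S (insert i (J.erase a)) u).mp hu
    have hui : u i = 1 := hu1 i (Finset.mem_insert_self i _)
    have huk : ∀ k ∈ J, k ≠ a → u k = 1 := fun k hk hka =>
      hu1 k (Finset.mem_insert_of_mem (Finset.mem_erase.mpr ⟨hka, hk⟩))
    have hua' : u a = t a := hua
    have ht'a : (t * u⁻¹) a = 1 := by
      show t a * (u a)⁻¹ = 1
      rw [hua', mul_inv_cancel]
    have key : (t * u⁻¹) i ∈ NJ G S i J := by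
      refine IH (fun x hx => hTJ (Finset.mem_insert_of_mem hx)) (t * u⁻¹)
        (mul_mem htS (inv_mem huS)) ?_ ?_
      · intro k hk hkT'
        by_cases hka : k = a
        · rw [hka]; exact ht'a
        · show t k * (u k)⁻¹ = 1
          rw [htriv k hk (by simp [Finset.mem_insert, hka, hkT']), huk k hk hka]
          simp
      · intro k hk
        by_cases hka : k = a
        · rw [hka, ht'a]; exact one_mem _
        · show t k * (u k)⁻¹ ∈ _
          rw [huk k hk hka]
          simpa using hmem k hk
    have : (t * u⁻¹) i = t i := by
      show t i * (u i)⁻¹ = t i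
      rw [hui]; simp
    rwa [this] at key

/-- Let `S` be a full subdirect product of `G₁ × ⋯ × Gₙ`, `i ∈ I`, and
`J ⊆ I \ {i}` nonempty. For `k ∈ J` set `J_k = (J \ {k}) ∪ {i}`. If `G_k ⧸ N_{J_k}^{(k)}`
is virtually nilpotent for each `k ∈ J`, then `G_i ⧸ N_J^{(i)}` is virtually nilpotent. -/
theorem quotient_NJ_virtuallyNilpotent_of_factors {n : ℕ} (hn : 2 ≤ n)
    (G : Fin n → Type*) [∀ i, Group (G i)] (S : Subgroup (∀ i, G i))
    (hsubdirect : ∀ i, S.map (Pi.evalMonoidHom G i) = ⊤)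
    (hfull : ∀ i, S ⊓ (MonoidHom.mulSingle G i).range ≠ ⊥)
    (i : Fin n) (J : Finset (Fin n)) (hJ : J.Nonempty) (hiJ : i ∉ J)
    (h : ∀ k ∈ J, QuotVirtuallyNilpotent (NJ G S k (insert i (J.erase k)))) :
    QuotVirtuallyNilpotent (NJ G S i J) := by
  classical
  choose H hle hfin c hc using h
  -- the chosen finite-index subgroups, extended by `⊤` off `J`
  set H'' : ∀ k, Subgroup (G k) := fun k => if hk : k ∈ J then H k hk else ⊤ with hH''
  set P : Subgroup (∀ j, G j) := ⨅ k, (H'' k).comap (Pi.evalMonoidHom G k) with hP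
  set S' : Subgroup (∀ j, G j) := S ⊓ P with hS'
  have hS'le : S' ≤ S := inf_le_left
  have hmemH : ∀ t ∈ S', ∀ k (hk : k ∈ J), t k ∈ H k hk := by
    intro t ht k hk
    have h2 := Subgroup.mem_iInf.mp (Subgroup.mem_inf.mp ht).2 k
    rw [Subgroup.mem_comap] at h2
    simpa [hH'', hk] using h2
  have hesurj : ∀ k, Function.Surjective (Pi.evalMonoidHom G k) := fun k x =>
    ⟨Pi.mulSingle k x, Pi.mulSingle_eq_same k x⟩
  -- finite index of `P`, hence finite relative index of `S'` in `S`
  have hPindex : P.index ≠ 0 := by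
    apply Subgroup.index_iInf_ne_zero
    intro k
    rw [(H'' k).index_comap_of_surjective (hesurj k)]
    by_cases hk : k ∈ J
    · simpa [hH'', hk] using (hfin k hk).index_ne_zero
    · simp [hH'', hk]
  have hrel : S'.relIndex S ≠ 0 := by
    have heq : S'.relIndex S = P.relIndex S := by
      rw [show S' = P ⊓ S from inf_comm S P, Subgroup.inf_relIndex_right]
    rw [heq]
    intro h0
    exact hPindex (Subgroup.index_eq_zero_of_relIndex_eq_zero h0)
  -- the subgroup `H_i := p_i(S')`
  set Hi : Subgroup (G i) := S'.map (Pi.evalMonoidHom G i) with hHi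
  set f' : S →* G i := (Pi.evalMonoidHom G i).comp S.subtype with hf'def
  have hf' : Function.Surjective f' := by
    rw [← MonoidHom.range_eq_top, hf'def, MonoidHom.range_comp, Subgroup.range_subtype]
    exact hsubdirect i
  have hHiS : Hi = (S'.subgroupOf S).map f' := by
    rw [hHi, hf'def, ← Subgroup.map_map, Subgroup.subgroupOf_map_subtype,
      inf_of_le_left hS'le]
  have hHifin : Hi.FiniteIndex := by
    constructor
    intro h0
    have hd := (S'.subgroupOf S).index_map_dvd hf'
    rw [← hHiS, h0] at hd
    exact hrel (Nat.eq_zero_of_zero_dvd hd)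
  have hN_le : NJ G S i J ≤ Hi := by
    rintro x ⟨t, ht0, rfl⟩
    have ht := (mem_projKer_iff G S J t).mp ht0
    refine ⟨t, Subgroup.mem_inf.mpr ⟨ht.1, Subgroup.mem_iInf.mpr fun k => ?_⟩, rfl⟩
    rw [Subgroup.mem_comap]
    by_cases hk : k ∈ J
    · have hk1 : (Pi.evalMonoidHom G k) t = 1 := ht.2 k hk
      rw [hk1]
      exact one_mem _
    · simp [hH'', hk]
  -- the nilpotency degree
  set c₀ : ℕ := J.attach.sup (fun k => c k.1 k.2) with hc₀
  refine ⟨Hi, hN_le, hHifin, c₀, ?_⟩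
  rw [hHi, lcs_map_subtype_eq]
  rintro x ⟨t, ht, rfl⟩
  obtain ⟨t₀, ht₀, rfl⟩ := ht
  show (↑t₀ : ∀ j, G j) i ∈ NJ G S i J
  refine mem_NJ_of_coords G S i J J (Finset.Subset.refl J) ↑t₀ (hS'le t₀.2)
    (fun k hk hk' => absurd hk hk') ?_
  intro k hk
  have h1 : (↑t₀ : ∀ j, G j) k
      ∈ (((⊤ : Subgroup S').lowerCentralSeries c₀).map S'.subtype).map (Pi.evalMonoidHom G k) :=
    ⟨↑t₀, ⟨t₀, ht₀, rfl⟩, rfl⟩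
  rw [← lcs_map_subtype_eq] at h1
  have hsub : S'.map (Pi.evalMonoidHom G k) ≤ H k hk := by
    rintro y ⟨s, hs, rfl⟩
    exact hmemH s hs k hk
  have h2 := lcs_map_subtype_mono hsub c₀ h1
  have h3 : ((⊤ : Subgroup (H k hk)).lowerCentralSeries c₀).map (H k hk).subtype
      ≤ ((⊤ : Subgroup (H k hk)).lowerCentralSeries (c k hk)).map (H k hk).subtype :=
    Subgroup.map_mono (Subgroup.lowerCentralSeries_antitone ⊤
      (Finset.le_sup (f := fun x : {x // x ∈ J} => c x.1 x.2) (J.mem_attach ⟨k, hk⟩)))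
  exact hc k hk (h3 h2)
end

section
/- Let G₁,…,Gₙ be finitely generated groups such that, for each i, every nontrivial finitely generated normal subgroup P of G_i has virtually cyclic quotient G_i/P. If N is a finitely generated full normal subgroup of G = G₁ × ⋯ × Gₙ (full meaning N ∩ G_i ≠ 1 for every i), then G/N is virtually abelian. -/
/-- A group is virtually cyclic if it has a cyclic subgroup of finite index. -/
def VirtuallyCyclic (Q : Type*) [Group Q] : Prop :=
  ∃ H : Subgroup Q, H.FiniteIndex ∧ IsCyclic H

/-- A group is virtually abelian if it has an abelian subgroup of finite index. -/
def VirtuallyAbelian (Q : Type*) [Group Q] : Prop :=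
  ∃ H : Subgroup Q, H.FiniteIndex ∧ ∀ a b : H, a * b = b * a

open scoped commutatorElement

private lemma my_index_pi {ι : Type*} [Fintype ι] {f : ι → Type*} [∀ i, Group (f i)]
    (H : ∀ i, Subgroup (f i)) :
    (Subgroup.pi Set.univ H).index = ∏ i, (H i).index := by
  simp_rw [Subgroup.index, ← Nat.card_pi]
  refine Nat.card_congr
    ((Quotient.congrRight (fun x y ↦ ?_)).trans (Setoid.piQuotientEquiv _).symm)
  rw [QuotientGroup.leftRel_pi]

private lemma my_fg_map {G H : Type*} [Group G] [Group H] {N : Subgroup G} (h : N.FG)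
    (f : G →* H) : (N.map f).FG := by
  classical
  obtain ⟨S, hS⟩ := h
  exact ⟨S.image f, by rw [Finset.coe_image, ← MonoidHom.map_closure, hS]⟩

private lemma comm_mem_commutator {Gi : Type*} [Group Gi] (P : Subgroup Gi) [P.Normal]
    (Hc : Subgroup (Gi ⧸ P)) (hcyc : IsCyclic Hc) {a b : Gi}
    (ha : QuotientGroup.mk' P a ∈ Hc) (hb : QuotientGroup.mk' P b ∈ Hc) :
    ⁅a, b⁆ ∈ ⁅(⊤ : Subgroup Gi), P⁆ := by
  obtain ⟨⟨g, hgmem⟩, hgen⟩ := hcyc.exists_generator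
  obtain ⟨t, ht⟩ := QuotientGroup.mk'_surjective P g
  obtain ⟨m, hm⟩ := Subgroup.mem_zpowers_iff.mp (hgen ⟨_, ha⟩)
  obtain ⟨k, hk⟩ := Subgroup.mem_zpowers_iff.mp (hgen ⟨_, hb⟩)
  have hm' : ((t ^ m : Gi) : Gi ⧸ P) = (a : Gi ⧸ P) := by
    have := congrArg Subtype.val hm
    simp only [SubgroupClass.coe_zpow] at this
    rw [← QuotientGroup.mk'_apply, map_zpow, ht, this, QuotientGroup.mk'_apply]
  have hk' : ((t ^ k : Gi) : Gi ⧸ P) = (b : Gi ⧸ P) := by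
    have := congrArg Subtype.val hk
    simp only [SubgroupClass.coe_zpow] at this
    rw [← QuotientGroup.mk'_apply, map_zpow, ht, this, QuotientGroup.mk'_apply]
  have hp : (t ^ m)⁻¹ * a ∈ P := QuotientGroup.eq.mp hm'
  have hq : (t ^ k)⁻¹ * b ∈ P := QuotientGroup.eq.mp hk'
  set W := ⁅(⊤ : Subgroup Gi), P⁆ with hWdef
  haveI : W.Normal := Subgroup.commutator_normal ⊤ P
  set π := QuotientGroup.mk' W with hπ
  have key : ∀ x ∈ P, ∀ u : Gi ⧸ W, Commute u (π x) := by
    intro x hx u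
    obtain ⟨v, rfl⟩ := QuotientGroup.mk'_surjective W u
    show π v * π x = π x * π v
    rw [← commutatorElement_eq_one_iff_mul_comm, ← map_commutatorElement]
    rw [QuotientGroup.mk'_apply, QuotientGroup.eq_one_iff]
    exact Subgroup.commutator_mem_commutator (Subgroup.mem_top v) hx
  have h1 : π ⁅a, b⁆ = 1 := by
    rw [map_commutatorElement, commutatorElement_eq_one_iff_mul_comm]
    have ea : π a = π t ^ m * π ((t ^ m)⁻¹ * a) := by
      rw [← map_zpow, ← map_mul, mul_inv_cancel_left]
    have eb : π b = π t ^ k * π ((t ^ k)⁻¹ * b) := by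
      rw [← map_zpow, ← map_mul, mul_inv_cancel_left]
    rw [ea, eb]
    exact (Commute.mul_left
      (((Commute.refl (π t)).zpow_zpow m k).mul_right (key _ hq (π t ^ m)))
      (Commute.mul_right (key _ hp (π t ^ k)).symm (key _ hp (π ((t ^ k)⁻¹ * b))).symm)).eq
  rw [QuotientGroup.mk'_apply, QuotientGroup.eq_one_iff] at h1
  exact h1

/-- Let `G₁, …, Gₙ` be finitely generated groups such that every
nontrivial finitely generated normal subgroup `P ≤ Gᵢ` has virtually cyclic quotient
`Gᵢ ⧸ P`. If `N` is a finitely generated full normal subgroup of `G₁ × ⋯ × Gₙ`, then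
`(G₁ × ⋯ × Gₙ) ⧸ N` is virtually abelian. -/
theorem quotient_virtuallyAbelian_of_fg_full_normal {n : ℕ} (hn : 2 ≤ n)
    (G : Fin n → Type*) [∀ i, Group (G i)] [∀ i, Group.FG (G i)]
    (hquot : ∀ (i : Fin n) (P : Subgroup (G i)) [P.Normal],
      P ≠ ⊥ → P.FG → VirtuallyCyclic (G i ⧸ P))
    (N : Subgroup (∀ i, G i)) [N.Normal] (hNfg : N.FG)
    (hNfull : ∀ i, N ⊓ (MonoidHom.mulSingle G i).range ≠ ⊥) :
    VirtuallyAbelian ((∀ i, G i) ⧸ N) := by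
  classical
  set P : ∀ i, Subgroup (G i) := fun i => N.map (Pi.evalMonoidHom G i) with hPdef
  have hsurj : ∀ i, Function.Surjective (Pi.evalMonoidHom G i) := fun i y =>
    ⟨Pi.mulSingle i y, by simp⟩
  haveI hPn : ∀ i, (P i).Normal := fun i => Subgroup.Normal.map ‹N.Normal› _ (hsurj i)
  have hPfg : ∀ i, (P i).FG := fun i => my_fg_map hNfg _
  have hPne : ∀ i, P i ≠ ⊥ := by
    intro i hbot
    apply hNfull i
    rw [Subgroup.eq_bot_iff_forall]
    intro x hx
    rw [Subgroup.mem_inf] at hx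
    obtain ⟨hxN, y, rfl⟩ := hx
    have hy : y ∈ P i := ⟨_, hxN, by simp [Pi.evalMonoidHom]⟩
    rw [hbot, Subgroup.mem_bot] at hy
    rw [hy]; simp
  have hVC : ∀ i, VirtuallyCyclic (G i ⧸ P i) := fun i => hquot i (P i) (hPne i) (hPfg i)
  choose Hc hHfi hHcyc using hVC
  set A : ∀ i, Subgroup (G i) := fun i => (Hc i).comap (QuotientGroup.mk' (P i)) with hAdef
  set K : Subgroup (∀ i, G i) := Subgroup.pi Set.univ A with hKdef
  have hKidx : K.index ≠ 0 := by
    rw [hKdef, my_index_pi]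
    rw [Finset.prod_ne_zero_iff]
    intro i _
    rw [hAdef]
    rw [Subgroup.index_comap_of_surjective _ (QuotientGroup.mk'_surjective _)]
    exact (hHfi i).index_ne_zero
  set φ := QuotientGroup.mk' N with hφ
  refine ⟨K.map φ, ⟨?_⟩, ?_⟩
  · have hle : K ≤ (K.map φ).comap φ := Subgroup.le_comap_map _ _
    have hdvd := Subgroup.index_dvd_of_le hle
    rw [Subgroup.index_comap_of_surjective _ (QuotientGroup.mk'_surjective N)] at hdvd
    exact fun h0 => hKidx (Nat.eq_zero_of_zero_dvd (h0 ▸ hdvd))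
  · rintro ⟨_, a, ha, rfl⟩ ⟨_, b, hb, rfl⟩
    have hmemN : ⁅a, b⁆ ∈ N := by
      apply Subgroup.pi_mem_of_mulSingle_mem
      intro i
      have hcomm : ⁅a i, b i⁆ ∈ ⁅(⊤ : Subgroup (G i)), P i⁆ :=
        comm_mem_commutator (P i) (Hc i) (hHcyc i)
          (ha i (Set.mem_univ i)) (hb i (Set.mem_univ i))
      have hWN : ⁅(⊤ : Subgroup (G i)), P i⁆ ≤ N.comap (MonoidHom.mulSingle G i) := by
        rw [Subgroup.commutator_le]
        rintro g - p ⟨x, hxN, rfl⟩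
        rw [Subgroup.mem_comap]
        have heq : MonoidHom.mulSingle G i ⁅g, Pi.evalMonoidHom G i x⁆ =
            ⁅Pi.mulSingle i g, x⁆ := by
          funext j
          rcases eq_or_ne j i with rfl | hj
          · simp [commutatorElement_def, Pi.evalMonoidHom]
          · simp [commutatorElement_def, Pi.mulSingle_eq_of_ne hj]
        rw [heq, commutatorElement_def]
        exact Subgroup.mul_mem _
          (‹N.Normal›.conj_mem x hxN (Pi.mulSingle i g)) (Subgroup.inv_mem _ hxN)
      have := hWN hcomm
      rw [Subgroup.mem_comap] at this
      exact this
    refine Subtype.ext ?_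
    show φ a * φ b = φ b * φ a
    rw [← commutatorElement_eq_one_iff_mul_comm, ← map_commutatorElement]
    rw [hφ, QuotientGroup.mk'_apply, QuotientGroup.eq_one_iff]
    exact hmemN
end

section
/- Let G be a group, L a normal subgroup of G, and S a subgroup with L ≤ S ≤ G. If G/L is virtually nilpotent, then there exist k ∈ ℕ and subgroups M₀ ≤ M₁ ≤ ⋯ ≤ M_k of G such that M₀ has finite index in S, M_k has finite index in G, each M_j is normal in M_{j+1}, and each quotient M_{j+1}/M_j is abelian (equivalently, ⁅M_{j+1}, M_{j+1}⁆ ≤ M_j for all j < k). -/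
open scoped Pointwise commutatorElement

/-- A group is virtually nilpotent if it has a nilpotent subgroup of finite index. -/
def VirtuallyNilpotent (Q : Type*) [Group Q] : Prop :=
  ∃ H : Subgroup Q, H.FiniteIndex ∧ Group.IsNilpotent H

/-- If `u` and `v` commute with `x`, `y` and each other modulo a normal subgroup `N`,
then `⁅x*u, y*v⁆ ≡ ⁅x, y⁆ mod N`. -/
lemma commutator_mul_mem_aux {Γ : Type*} [Group Γ] (N : Subgroup Γ) [N.Normal]
    {x y u v : Γ} (_h1 : ⁅x, u⁆ ∈ N) (h2 : ⁅y, u⁆ ∈ N) (h3 : ⁅x, v⁆ ∈ N)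
    (h4 : ⁅y, v⁆ ∈ N) (h5 : ⁅u, v⁆ ∈ N) :
    ⁅x * u, y * v⁆ * ⁅x, y⁆⁻¹ ∈ N := by
  have q : ∀ a b : Γ, ⁅a, b⁆ ∈ N → Commute ((a : Γ) : Γ ⧸ N) ((b : Γ) : Γ ⧸ N) := by
    intro a b hab
    rw [← commutatorElement_eq_one_iff_commute]
    show ⁅(QuotientGroup.mk' N) a, (QuotientGroup.mk' N) b⁆ = 1
    rw [← map_commutatorElement, ← MonoidHom.mem_ker, QuotientGroup.ker_mk']
    exact hab
  have c2 := q _ _ h2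
  have c3 := q _ _ h3
  have c4 := q _ _ h4
  have c5 := q _ _ h5
  rw [← QuotientGroup.eq_one_iff]
  simp only [commutatorElement_def, QuotientGroup.mk_mul, QuotientGroup.mk_inv]
  set X : Γ ⧸ N := ((x : Γ) : Γ ⧸ N)
  set Y : Γ ⧸ N := ((y : Γ) : Γ ⧸ N)
  set U : Γ ⧸ N := ((u : Γ) : Γ ⧸ N)
  set V : Γ ⧸ N := ((v : Γ) : Γ ⧸ N)
  have key : X * U * (Y * V) * (X * U)⁻¹ * (Y * V)⁻¹ = X * Y * X⁻¹ * Y⁻¹ := by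
    have hb : Commute U (Y * V) := (Commute.mul_left c2 c5.symm).symm
    have hVX : V * X⁻¹ = X⁻¹ * V := (c3.symm.inv_right).eq
    calc (X * U) * (Y * V) * (X * U)⁻¹ * (Y * V)⁻¹
        = X * (U * (Y * V)) * U⁻¹ * X⁻¹ * (V⁻¹ * Y⁻¹) := by group
      _ = X * ((Y * V) * U) * U⁻¹ * X⁻¹ * (V⁻¹ * Y⁻¹) := by rw [hb.eq]
      _ = X * Y * (V * X⁻¹) * (V⁻¹ * Y⁻¹) := by group
      _ = X * Y * (X⁻¹ * V) * (V⁻¹ * Y⁻¹) := by rw [hVX]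
      _ = X * Y * X⁻¹ * Y⁻¹ := by group
  rw [key]
  group

/-- Let `L ⊴ G` and `L ≤ S ≤ G`. If `G ⧸ L` is virtually nilpotent, then
there are `k` and subgroups `M 0 ≤ M 1 ≤ ⋯ ≤ M k` of `G` such that `M 0` has finite index
in `S`, `M k` has finite index in `G`, and each `M j` is normal in `M (j+1)` with abelian
quotient, i.e. `⁅M (j+1), M (j+1)⁆ ≤ M j` for all `j < k`. -/
theorem subnormal_series_of_virtuallyNilpotent_quotient {G : Type*} [Group G]
    (L : Subgroup G) [L.Normal] (S : Subgroup G) (hLS : L ≤ S)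
    (h : VirtuallyNilpotent (G ⧸ L)) :
    ∃ (k : ℕ) (M : ℕ → Subgroup G),
      M 0 ≤ S ∧ (M 0).relIndex S ≠ 0 ∧ (M k).index ≠ 0 ∧
      ∀ j < k, M j ≤ M (j + 1) ∧ ⁅M (j + 1), M (j + 1)⁆ ≤ M j := by
  obtain ⟨H, hHfi, hHnil⟩ := h
  haveI : H.FiniteIndex := hHfi
  haveI : Group.IsNilpotent ↥H := hHnil
  let π : G →* G ⧸ L := QuotientGroup.mk' L
  let K : Subgroup (G ⧸ L) := H.normalCore
  haveI hKnil : Group.IsNilpotent ↥K := by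
    have e := Subgroup.subgroupOfEquivOfLe (H.normalCore_le)
    exact nilpotent_of_surjective e.toMonoidHom e.surjective
  obtain ⟨c, hc⟩ := nilpotent_iff_lowerCentralSeries.mp hKnil
  let P : Subgroup G := K.comap π
  haveI hPfi : P.FiniteIndex := by
    constructor
    rw [Subgroup.index_comap_of_surjective _ (QuotientGroup.mk'_surjective L)]
    exact Subgroup.FiniteIndex.index_ne_zero
  let A : Subgroup ↥K := ((S.map π) ⊓ K).subgroupOf K
  let Mh : ℕ → Subgroup ↥K := fun j => A ⊔ Subgroup.lowerCentralSeries (⊤ : Subgroup ↥K) (c - j)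
  let M : ℕ → Subgroup G := fun j => ((Mh j).map K.subtype).comap π
  have hM0 : M 0 = S ⊓ P := by
    show ((A ⊔ Subgroup.lowerCentralSeries (⊤ : Subgroup ↥K) (c - 0)).map K.subtype).comap π = S ⊓ P
    rw [Nat.sub_zero, hc, sup_bot_eq, Subgroup.subgroupOf_map_subtype, inf_assoc, inf_idem,
      Subgroup.comap_inf, Subgroup.comap_map_eq]
    congr 1
    rw [QuotientGroup.ker_mk']
    exact sup_eq_left.mpr hLS
  refine ⟨c, M, ?_, ?_, ?_, ?_⟩
  · rw [hM0]; exact inf_le_left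
  · rw [hM0, inf_comm, Subgroup.inf_relIndex_right]
    exact Subgroup.FiniteIndex.index_ne_zero (H := P.subgroupOf S)
  · have hMc : M c = P := by
      show ((A ⊔ Subgroup.lowerCentralSeries (⊤ : Subgroup ↥K) (c - c)).map K.subtype).comap π = P
      rw [Nat.sub_self, lowerCentralSeries_zero, sup_top_eq, ← MonoidHom.range_eq_map,
        Subgroup.range_subtype]
    rw [hMc]
    exact Subgroup.FiniteIndex.index_ne_zero
  · intro j hj
    have hmono : Mh j ≤ Mh (j + 1) :=
      sup_le_sup_left (lowerCentralSeries_antitone _ (Nat.sub_le_sub_left (Nat.le_succ j) c)) A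
    have hcomm : ⁅Mh (j + 1), Mh (j + 1)⁆ ≤ Mh j := by
      rw [Subgroup.commutator_le]
      intro g hg h' hh'
      set N' : Subgroup ↥K := Subgroup.lowerCentralSeries (⊤ : Subgroup ↥K) (c - (j + 1))
      set N : Subgroup ↥K := Subgroup.lowerCentralSeries (⊤ : Subgroup ↥K) (c - j)
      have hmem : ∀ w : ↥K, w ∈ Mh (j + 1) → ∃ a ∈ A, ∃ u ∈ N', a * u = w := by
        intro w hw
        have hset : w ∈ ((A : Set ↥K) * (N' : Set ↥K)) := by
          rw [← Subgroup.mul_normal A N']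
          exact hw
        obtain ⟨a, ha, u, hu, hau⟩ := Set.mem_mul.mp hset
        exact ⟨a, ha, u, hu, hau⟩
      obtain ⟨a, ha, u, hu, rfl⟩ := hmem g hg
      obtain ⟨b, hb, v, hv, rfl⟩ := hmem h' hh'
      have hN'N : ∀ p w : ↥K, w ∈ N' → ⁅p, w⁆ ∈ N := by
        intro p w hw
        have h1 : ⁅w, p⁆ ∈ ⁅N', (⊤ : Subgroup ↥K)⁆ :=
          Subgroup.commutator_mem_commutator hw (Subgroup.mem_top p)
        have h2 : ⁅N', (⊤ : Subgroup ↥K)⁆ = Subgroup.lowerCentralSeries (⊤ : Subgroup ↥K) (c - (j + 1) + 1) := rfl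
        have h3 : c - (j + 1) + 1 = c - j := by omega
        rw [h2, h3] at h1
        have : ⁅p, w⁆ = ⁅w, p⁆⁻¹ := (commutatorElement_inv w p).symm
        rw [this]
        exact N.inv_mem h1
      have hkey : ⁅a * u, b * v⁆ * ⁅a, b⁆⁻¹ ∈ N :=
        commutator_mul_mem_aux N (hN'N a u hu) (hN'N b u hu) (hN'N a v hv) (hN'N b v hv)
          (hN'N u v hv)
      have hab : ⁅a, b⁆ ∈ A := by
        rw [commutatorElement_def]
        exact mul_mem (mul_mem (mul_mem ha hb) (inv_mem ha)) (inv_mem hb)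
      have heq : ⁅a * u, b * v⁆ = (⁅a * u, b * v⁆ * ⁅a, b⁆⁻¹) * ⁅a, b⁆ := by group
      rw [heq]
      exact mul_mem (Subgroup.mem_sup_right hkey) (Subgroup.mem_sup_left hab)
    constructor
    · exact Subgroup.comap_mono (Subgroup.map_mono hmono)
    · rw [Subgroup.commutator_le]
      intro g hg h' hh'
      have hg' : π g ∈ (Mh (j + 1)).map K.subtype := hg
      have hh'' : π h' ∈ (Mh (j + 1)).map K.subtype := hh'
      show π ⁅g, h'⁆ ∈ (Mh j).map K.subtype
      rw [map_commutatorElement]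
      have hmem := Subgroup.commutator_mem_commutator hg' hh''
      rw [← Subgroup.map_commutator] at hmem
      exact Subgroup.map_mono hcomm hmem
end

section
/- Every finitely generated group whose commutator subgroup is finite is virtually abelian; that is, if G is finitely generated and ⁅G,G⁆ is a finite subgroup, then G has an abelian subgroup of finite index. -/
/-- A finitely generated group with finite commutator subgroup is
virtually abelian. -/
theorem virtuallyAbelian_of_finite_commutator {G : Type*} [Group G] [Group.FG G]
    (h : Finite (commutator G)) :
    VirtuallyAbelian G := by
  have hs : commutatorSet G ⊆ (commutator G : Set G) := by
    rw [commutator_eq_closure]; exact Subgroup.subset_closure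
  have hfin : (commutator G : Set G).Finite := Set.toFinite _
  haveI : Finite (commutatorSet G) := (hfin.subset hs).to_subtype
  haveI := Subgroup.finiteIndex_center (G := G)
  exact ⟨Subgroup.center G, inferInstance, fun a b => Subtype.ext (Subgroup.mem_center_iff.mp b.2 a)⟩
end
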